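/- arXiv:0803.3716 — 6 statements merged into one kernel-verified Lean document; each statement's English description precedes it below -/
import Mathlib

section
/- Suppose P{M = 0} = 0, P{Q = 0} < 1, P{Q + Mc = c} < 1 for every c ∈ ℝ, and the perpetuity series Z∞ = Σ_{k≥1} Π_{k−1} Q_k converges almost surely. Then the distribution of Z∞ has no atoms, i.e., P{Z∞ = x} = 0 for every x ∈ ℝ. -/
open MeasureTheory ProbabilityTheory Filter Finset Real
open scoped ENNReal NNReal

noncomputable section PerpetuityAux

namespace PerpetuityAux

/-- partial sums of the perpetuity series, as a function on sequence space -/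
def psum (n : ℕ) (s : ℕ → ℝ × ℝ) : ℝ :=
  ∑ k ∈ Finset.range n, (∏ i ∈ Finset.range k, (s i).1) * (s k).2

lemma measurable_psum (n : ℕ) : Measurable (psum n) := by
  apply Finset.measurable_sum
  intro k _
  exact (Finset.measurable_prod _ (fun i _ => (measurable_pi_apply i).fst)).mul
    (measurable_pi_apply k).snd

lemma psum_succ (n : ℕ) (s : ℕ → ℝ × ℝ) :
    psum (n + 1) s = (s 0).2 + (s 0).1 * psum n (fun i => s (i + 1)) := by
  unfold psum
  rw [Finset.sum_range_succ', Finset.mul_sum]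
  simp only [Finset.prod_range_zero, one_mul, Finset.prod_range_succ']
  rw [add_comm]
  congr 1
  refine Finset.sum_congr rfl fun k _ => ?_
  ring

/-- the set of sequences where the perpetuity series converges -/
def convSet : Set (ℕ → ℝ × ℝ) := {s | ∃ c, Tendsto (fun n => psum n s) atTop (nhds c)}

lemma measurableSet_convSet : MeasurableSet convSet :=
  measurableSet_exists_tendsto (fun n => measurable_psum n)

/-- the limit of the perpetuity series (junk value off the convergence set) -/
def glim (s : ℕ → ℝ × ℝ) : ℝ :=
  limUnder atTop (fun n => convSet.indicator (psum n) s)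

lemma tendsto_glim (s : ℕ → ℝ × ℝ) :
    Tendsto (fun n => convSet.indicator (psum n) s) atTop (nhds (glim s)) := by
  apply tendsto_nhds_limUnder
  by_cases hs : s ∈ convSet
  · obtain ⟨c, hc⟩ := hs
    refine ⟨c, ?_⟩
    simpa [Set.indicator_of_mem (show s ∈ convSet from ⟨c, hc⟩)] using hc
  · exact ⟨0, by simp [Set.indicator_of_notMem hs]⟩

lemma measurable_glim : Measurable glim :=
  measurable_of_tendsto_metrizable
    (fun n => (measurable_psum n).indicator measurableSet_convSet)
    (tendsto_pi_nhds.2 tendsto_glim)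

lemma glim_eq {s : ℕ → ℝ × ℝ} {c : ℝ} (h : Tendsto (fun n => psum n s) atTop (nhds c)) :
    glim s = c := by
  have hs : s ∈ convSet := ⟨c, h⟩
  refine tendsto_nhds_unique (tendsto_glim s) ?_
  simpa [Set.indicator_of_mem hs] using h

/-- shift invariance of the law of an i.i.d. sequence -/
lemma map_shift_eq {Ω : Type*} [MeasurableSpace Ω] (μ : Measure Ω) [IsProbabilityMeasure μ]
    (M Q : ℕ → Ω → ℝ) (hM : ∀ n, Measurable (M n)) (hQ : ∀ n, Measurable (Q n))
    (hindep : iIndepFun (fun n ω => (M n ω, Q n ω)) μ)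
    (hident : ∀ n, IdentDistrib (fun ω => (M n ω, Q n ω)) (fun ω => (M 0 ω, Q 0 ω)) μ μ) :
    μ.map (fun ω n => (M n ω, Q n ω)) = μ.map (fun ω n => (M (n + 1) ω, Q (n + 1) ω)) := by
  classical
  have hP : ∀ n, Measurable (fun ω => (M n ω, Q n ω)) := fun n => (hM n).prodMk (hQ n)
  have hX : Measurable (fun ω (n : ℕ) => (M n ω, Q n ω)) := measurable_pi_lambda _ hP
  have hX' : Measurable (fun ω (n : ℕ) => (M (n + 1) ω, Q (n + 1) ω)) :=
    measurable_pi_lambda _ (fun n => hP (n + 1))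
  haveI := Measure.isProbabilityMeasure_map (μ := μ) hX.aemeasurable
  haveI := Measure.isProbabilityMeasure_map (μ := μ) hX'.aemeasurable
  refine ext_of_generate_finite _ generateFrom_squareCylinders.symm
    (isPiSystem_squareCylinders
      (fun _ s hs t ht _ => by
        simp only [Set.mem_setOf_eq] at *; exact hs.inter ht)
      (fun _ => by simp only [Set.mem_setOf_eq]; exact MeasurableSet.univ))
    ?_ (by simp)
  rintro S ⟨t, f, hf, rfl⟩
  simp only [Set.mem_pi, Set.mem_setOf_eq, Set.mem_univ, forall_true_left] at hf
  have hpi : MeasurableSet ((t : Set ℕ).pi f) :=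
    MeasurableSet.pi (Finset.countable_toSet t) (fun i _ => hf i)
  have hpre : ∀ (g : ℕ → Ω → ℝ × ℝ),
      (fun ω n => g n ω) ⁻¹' ((t : Set ℕ).pi f) = ⋂ i ∈ t, g i ⁻¹' f i := by
    intro g
    ext ω
    simp [Set.mem_pi]
  rw [Measure.map_apply hX hpi, Measure.map_apply hX' hpi, hpre (fun n ω => (M n ω, Q n ω)),
    hpre (fun n ω => (M (n + 1) ω, Q (n + 1) ω))]
  rw [hindep.measure_inter_preimage_eq_mul t (fun i _ => hf i)]
  have himg : (⋂ i ∈ t, (fun ω => (M (i + 1) ω, Q (i + 1) ω)) ⁻¹' f i)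
      = ⋂ j ∈ t.image (· + 1), (fun ω => (M j ω, Q j ω)) ⁻¹' f (j - 1) := by
    ext ω
    simp only [Set.mem_iInter, Finset.mem_image, Set.mem_preimage]
    constructor
    · rintro h j ⟨i, hi, rfl⟩
      simpa using h i hi
    · intro h i hi
      simpa using h (i + 1) ⟨i, hi, rfl⟩
  rw [himg, hindep.measure_inter_preimage_eq_mul (t.image (· + 1))
    (fun j hj => ?_), Finset.prod_image (fun a _ b _ h => by omega)]
  · refine Finset.prod_congr rfl fun i _ => ?_
    exact ((hident i).measure_mem_eq (hf i)).trans ((hident (i + 1)).measure_mem_eq (hf i)).symm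
  · obtain ⟨i, hi, rfl⟩ := Finset.mem_image.1 hj
    simpa using hf i

/-- measurability of the atom-mass function of a measure on ℝ -/
lemma measurable_meas_singleton (κ : Measure ℝ) [IsFiniteMeasure κ] :
    Measurable (fun x : ℝ => κ {x}) := by
  set D : Set (ℝ × ℝ) := {p | p.2 = p.1} with hD
  have hdiag : MeasurableSet D := measurableSet_eq_fun measurable_snd measurable_fst
  have heq : (fun x : ℝ => κ {x})
      = fun x => ∫⁻ y, D.indicator (fun _ => (1 : ℝ≥0∞)) (x, y) ∂κ := by
    funext x
    have h' : (fun y => D.indicator (fun _ => (1 : ℝ≥0∞)) (x, y))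
        = ({x} : Set ℝ).indicator (1 : ℝ → ℝ≥0∞) := by
      funext y
      by_cases h : y = x <;> simp [hD, Set.indicator_apply, h]
    rw [h']
    exact (lintegral_indicator_one (measurableSet_singleton x)).symm
  rw [heq]
  exact Measurable.lintegral_prod_right' (measurable_const.indicator hdiag)

end PerpetuityAux

end PerpetuityAux

open PerpetuityAux

/-- If `P{M = 0} = 0`, `P{Q = 0} < 1`, `P{Q + Mc = c} < 1` for every `c`, and the
perpetuity series converges almost surely, then the distribution of `Z∞` has no atoms. -/
theorem perpetuity_no_atoms
    {Ω : Type*} [MeasurableSpace Ω] (μ : Measure Ω) [IsProbabilityMeasure μ]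
    (M Q : ℕ → Ω → ℝ)
    (hM : ∀ n, Measurable (M n)) (hQ : ∀ n, Measurable (Q n))
    (hindep : iIndepFun (fun n ω => (M n ω, Q n ω)) μ)
    (hident : ∀ n, IdentDistrib (fun ω => (M n ω, Q n ω)) (fun ω => (M 0 ω, Q 0 ω)) μ μ)
    (hM0 : μ {ω | M 0 ω = 0} = 0)
    (hQ0 : μ {ω | Q 0 ω = 0} < 1)
    (hdegen : ∀ c : ℝ, μ {ω | Q 0 ω + M 0 ω * c = c} < 1)
    (Z : Ω → ℝ) (hZ : Measurable Z)
    (hconv : ∀ᵐ ω ∂μ, Tendsto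
      (fun n => ∑ k ∈ Finset.range n, (∏ i ∈ Finset.range k, M i ω) * Q k ω)
      atTop (nhds (Z ω))) :
    ∀ x : ℝ, μ {ω | Z ω = x} = 0 := by
  classical
  have hP : ∀ n, Measurable (fun ω => (M n ω, Q n ω)) := fun n => (hM n).prodMk (hQ n)
  set X : Ω → ℕ → ℝ × ℝ := fun ω n => (M n ω, Q n ω) with hXdef
  have hXm : Measurable X := measurable_pi_lambda _ hP
  set X' : Ω → ℕ → ℝ × ℝ := fun ω n => (M (n + 1) ω, Q (n + 1) ω) with hX'def
  have hX'm : Measurable X' := measurable_pi_lambda _ (fun n => hP (n + 1))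
  have hne : ∀ᵐ ω ∂μ, M 0 ω ≠ 0 := by
    rw [ae_iff]
    simpa using hM0
  -- Z is a.e. equal to glim ∘ X
  have hconv' : ∀ᵐ ω ∂μ, Tendsto (fun n => psum n (X ω)) atTop (nhds (Z ω)) := hconv
  have hZg : (fun ω => glim (X ω)) =ᵐ[μ] Z := hconv'.mono (fun ω h => glim_eq h)
  -- the shifted limit
  set Z' : Ω → ℝ := fun ω => (Z ω - Q 0 ω) / M 0 ω with hZ'def
  have hZ'm : Measurable Z' := (hZ.sub (hQ 0)).div (hM 0)
  have hZeq : ∀ᵐ ω ∂μ, Z ω = Q 0 ω + M 0 ω * Z' ω := by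
    filter_upwards [hne] with ω h
    rw [hZ'def]
    field_simp
    ring
  have hZ'g : (fun ω => glim (X' ω)) =ᵐ[μ] Z' := by
    filter_upwards [hconv', hne] with ω hc h0
    apply glim_eq
    have h1 : Tendsto (fun n => psum (n + 1) (X ω)) atTop (nhds (Z ω)) :=
      hc.comp (tendsto_add_atTop_nat 1)
    have h2 : Tendsto (fun n => (psum (n + 1) (X ω) - Q 0 ω) / M 0 ω) atTop
        (nhds ((Z ω - Q 0 ω) / M 0 ω)) := (h1.sub_const _).div_const _
    refine Tendsto.congr (fun n => ?_) h2
    rw [psum_succ]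
    show (Q 0 ω + M 0 ω * psum n (X' ω) - Q 0 ω) / M 0 ω = psum n (X' ω)
    field_simp
    ring
  -- identical distribution of Z and Z'
  have hlaw : μ.map X = μ.map X' := map_shift_eq μ M Q hM hQ hindep hident
  have hid : μ.map Z = μ.map Z' := by
    calc μ.map Z = μ.map (fun ω => glim (X ω)) := (Measure.map_congr hZg).symm
    _ = (μ.map X).map glim := (Measure.map_map measurable_glim hXm).symm
    _ = (μ.map X').map glim := by rw [hlaw]
    _ = μ.map (fun ω => glim (X' ω)) := Measure.map_map measurable_glim hX'm
    _ = μ.map Z' := Measure.map_congr hZ'g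
  -- independence of Z' and (M 0, Q 0)
  have hIndep : IndepFun (fun ω => (M 0 ω, Q 0 ω)) Z' μ := by
    have h_le : ∀ n, MeasurableSpace.comap (fun ω => (M n ω, Q n ω)) inferInstance
        ≤ (inferInstance : MeasurableSpace Ω) := fun n => (hP n).comap_le
    have hi : Indep
        (⨆ n ∈ ({0} : Set ℕ), MeasurableSpace.comap (fun ω => (M n ω, Q n ω)) inferInstance)
        (⨆ n ∈ ({0}ᶜ : Set ℕ), MeasurableSpace.comap (fun ω => (M n ω, Q n ω)) inferInstance)
        μ :=
      indep_biSup_compl h_le ((iIndepFun_iff_iIndep _ _ _).1 hindep) {0}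
    have h1 : MeasurableSpace.comap (fun ω => (M 0 ω, Q 0 ω)) inferInstance
        ≤ ⨆ n ∈ ({0} : Set ℕ),
          MeasurableSpace.comap (fun ω => (M n ω, Q n ω)) inferInstance :=
      le_iSup₂ (f := fun (n : ℕ) (_ : n ∈ ({0} : Set ℕ)) =>
        MeasurableSpace.comap (fun ω => (M n ω, Q n ω)) inferInstance) 0 rfl
    have h2 : MeasurableSpace.comap X' inferInstance
        ≤ ⨆ n ∈ ({0}ᶜ : Set ℕ),
          MeasurableSpace.comap (fun ω => (M n ω, Q n ω)) inferInstance := by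
      have hXm' : @Measurable Ω (ℕ → ℝ × ℝ)
          (⨆ n ∈ ({0}ᶜ : Set ℕ),
            MeasurableSpace.comap (fun ω => (M n ω, Q n ω)) inferInstance) _ X' := by
        refine @measurable_pi_lambda Ω ℕ (fun _ => ℝ × ℝ)
          (⨆ n ∈ ({0}ᶜ : Set ℕ),
            MeasurableSpace.comap (fun ω => (M n ω, Q n ω)) inferInstance) _ X' (fun j => ?_)
        exact (measurable_iff_comap_le.2 le_rfl).mono
          (le_iSup₂ (f := fun (n : ℕ) (_ : n ∈ ({0}ᶜ : Set ℕ)) =>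
            MeasurableSpace.comap (fun ω => (M n ω, Q n ω)) inferInstance) (j + 1)
            (by simp)) le_rfl
      exact hXm'.comap_le
    have hIX : IndepFun (fun ω => (M 0 ω, Q 0 ω)) X' μ :=
      (IndepFun_iff_Indep _ _ _).2
        (indep_of_indep_of_le_right (indep_of_indep_of_le_left hi h1) h2)
    have hcomp := hIX.comp measurable_id measurable_glim
    exact hcomp.congr (Filter.EventuallyEq.refl _ _) hZ'g
  -- the law of (M 0, Q 0) and the atom-mass function
  set ν : Measure (ℝ × ℝ) := μ.map (fun ω => (M 0 ω, Q 0 ω)) with hνdef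
  haveI : IsProbabilityMeasure ν := Measure.isProbabilityMeasure_map (μ := μ) (hP 0).aemeasurable
  haveI : IsProbabilityMeasure (μ.map Z) := Measure.isProbabilityMeasure_map (μ := μ) hZ.aemeasurable
  set f : ℝ → ℝ≥0∞ := fun x => μ {ω | Z ω = x} with hfdef
  have hfx : ∀ x, f x = (μ.map Z) {x} := fun x => by
    rw [Measure.map_apply hZ (measurableSet_singleton x)]
    rfl
  have hfmeas : Measurable f := by
    have : f = fun x => (μ.map Z) {x} := funext hfx
    rw [this]
    exact measurable_meas_singleton (μ.map Z)
  have hν0 : ∀ᵐ p ∂ν, p.1 ≠ 0 := by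
    rw [ae_iff]
    have : {p : ℝ × ℝ | ¬p.1 ≠ 0} = (fun p : ℝ × ℝ => p.1) ⁻¹' {0} := by
      ext p; simp
    rw [this, hνdef, Measure.map_apply (hP 0) (measurable_fst (measurableSet_singleton 0))]
    exact hM0
  -- the key fixed-point identity
  have key : ∀ x : ℝ, f x = ∫⁻ p, f ((x - p.2) / p.1) ∂ν := by
    intro x
    set E : Set ((ℝ × ℝ) × ℝ) := {pz | pz.1.2 + pz.1.1 * pz.2 = x} with hEdef
    have hE : MeasurableSet E :=
      measurableSet_eq_fun
        ((measurable_fst.snd).add (measurable_fst.fst.mul measurable_snd)) measurable_const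
    have h1 : f x = μ ((fun ω => ((M 0 ω, Q 0 ω), Z' ω)) ⁻¹' E) := by
      refine measure_congr ?_
      rw [Filter.eventuallyEq_set]
      filter_upwards [hZeq] with ω h
      simp only [hEdef, Set.mem_setOf_eq, Set.mem_preimage]
      rw [h]
    have h2 : μ.map (fun ω => ((M 0 ω, Q 0 ω), Z' ω)) = ν.prod (μ.map Z') :=
      (indepFun_iff_map_prod_eq_prod_map_map (hP 0).aemeasurable hZ'm.aemeasurable).1 hIndep
    rw [h1, ← Measure.map_apply ((hP 0).prodMk hZ'm) hE, h2, ← hid, Measure.prod_apply hE]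
    refine lintegral_congr_ae (hν0.mono fun p hp => ?_)
    have hset : (Prod.mk p ⁻¹' E) = {(x - p.2) / p.1} := by
      ext z
      simp only [hEdef, Set.mem_preimage, Set.mem_setOf_eq, Set.mem_singleton_iff]
      constructor
      · intro h
        field_simp
        linarith
      · intro h
        subst h
        field_simp
        ring
    show (Measure.map Z μ) (Prod.mk p ⁻¹' E) = f ((x - p.2) / p.1)
    rw [hset]
    exact (hfx _).symm
  -- it suffices to show the maximal atom mass is zero
  suffices hsup : (⨆ y : ℝ, f y) = 0 by
    intro x
    exact le_antisymm ((le_iSup f x).trans hsup.le) (zero_le)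
  by_contra hp
  set p₀ := ⨆ y : ℝ, f y with hp₀
  have hfle : ∀ y, f y ≤ p₀ := fun y => le_iSup f y
  have hp₀le : p₀ ≤ 1 := iSup_le fun y => prob_le_one
  have hp₀top : p₀ ≠ ⊤ := (hp₀le.trans_lt ENNReal.one_lt_top).ne
  have hhalf : p₀ / 2 < p₀ := ENNReal.half_lt_self hp hp₀top
  set B := {y : ℝ | p₀ / 2 < f y} with hB
  have hBne : B.Nonempty := by
    obtain ⟨y, hy⟩ := lt_iSup_iff.1 hhalf
    exact ⟨y, hy⟩
  have hdisj : ∀ T : Finset ℝ, μ (⋃ y ∈ T, {ω | Z ω = y}) = ∑ y ∈ T, f y := fun T =>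
    measure_biUnion_finset
      (fun a _ b _ hab => Set.disjoint_left.2 fun ω ha hb => hab (ha.symm.trans hb))
      (fun y _ => hZ (measurableSet_singleton y))
  have hBfin : B.Finite := by
    by_contra hInf
    have h2pos : p₀ / 2 ≠ 0 := by
      intro h
      rcases ENNReal.div_eq_zero_iff.1 h with h' | h'
      · exact hp h'
      · exact ENNReal.ofNat_ne_top h'
    have h2top : p₀ / 2 ≠ ⊤ := (ENNReal.div_lt_top hp₀top (by norm_num)).ne
    obtain ⟨N, hN⟩ := ENNReal.exists_nat_gt (ENNReal.inv_ne_top.2 h2pos)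
    have hlt : (1 : ℝ≥0∞) < N * (p₀ / 2) := by
      have h' := (ENNReal.mul_lt_mul_iff_left h2pos h2top).2 hN
      rwa [ENNReal.inv_mul_cancel h2pos h2top] at h'
    obtain ⟨T, hTB, hTcard⟩ := Set.Infinite.exists_subset_card_eq hInf N
    have hle : (N : ℝ≥0∞) * (p₀ / 2) ≤ 1 := by
      calc (N : ℝ≥0∞) * (p₀ / 2) = ∑ _y ∈ T, p₀ / 2 := by
            rw [Finset.sum_const, hTcard, nsmul_eq_mul]
      _ ≤ ∑ y ∈ T, f y := Finset.sum_le_sum fun y hy => (hTB (Finset.mem_coe.2 hy)).le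
      _ = μ (⋃ y ∈ T, {ω | Z ω = y}) := (hdisj T).symm
      _ ≤ 1 := prob_le_one
    exact absurd hle (not_le.2 hlt)
  -- the supremum is attained; A is the set of maximal atoms
  obtain ⟨x₀, hx₀B, hx₀max⟩ := hBfin.toFinset.exists_max_image f
    (by rwa [hBfin.toFinset_nonempty])
  rw [hBfin.mem_toFinset] at hx₀B
  have hx₀ : f x₀ = p₀ := by
    refine le_antisymm (hfle x₀) (iSup_le fun y => ?_)
    by_cases hy : y ∈ B
    · exact hx₀max y (hBfin.mem_toFinset.2 hy)
    · exact (not_lt.1 hy).trans hx₀B.le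
  set A := hBfin.toFinset.filter (fun y => f y = p₀) with hAdef
  have hmemA : ∀ y, y ∈ A ↔ f y = p₀ := fun y => by
    simp only [hAdef, Finset.mem_filter, hBfin.mem_toFinset]
    exact ⟨fun h => h.2, fun h => ⟨lt_of_lt_of_le hhalf h.ge, h⟩⟩
  have hAne : A.Nonempty := ⟨x₀, (hmemA x₀).2 hx₀⟩
  -- a.e., each maximal atom is mapped to a maximal atom
  have hae : ∀ y ∈ A, ∀ᵐ p ∂ν, ((y - p.2) / p.1) ∈ A := by
    intro y hy
    have hyp : f y = p₀ := (hmemA y).1 hy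
    have hgm : Measurable (fun p : ℝ × ℝ => f ((y - p.2) / p.1)) :=
      hfmeas.comp ((measurable_const.sub measurable_snd).div measurable_fst)
    have hint : ∫⁻ p, f ((y - p.2) / p.1) ∂ν = p₀ := (key y).symm.trans hyp
    have hsub : ∫⁻ p, (p₀ - f ((y - p.2) / p.1)) ∂ν = 0 := by
      rw [lintegral_sub hgm (by rw [hint]; exact hp₀top) (ae_of_all _ fun p => hfle _),
        hint, lintegral_const, measure_univ, mul_one, tsub_self]
    have h0 := (lintegral_eq_zero_iff (measurable_const.sub hgm)).1 hsub
    filter_upwards [h0] with p hp'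
    have hle' : p₀ ≤ f ((y - p.2) / p.1) := tsub_eq_zero_iff_le.1 hp'
    exact (hmemA _).2 (le_antisymm (hfle _) hle')
  have haeAll : ∀ᵐ p ∂ν, p.1 ≠ 0 ∧ ∀ y ∈ A, ((y - p.2) / p.1) ∈ A := by
    refine hν0.and ?_
    have h' := (ae_ball_iff (A : Set ℝ).to_countable).2
      (fun y (hy : y ∈ (A : Set ℝ)) => hae y (Finset.mem_coe.1 hy))
    filter_upwards [h'] with p hp' y hy
    exact hp' y (Finset.mem_coe.2 hy)
  -- conclude degeneracy
  set c : ℝ := (∑ y ∈ A, y) / A.card with hc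
  have hfinal : ∀ᵐ p ∂ν, p.2 + p.1 * c = c := by
    filter_upwards [haeAll] with p hp'
    obtain ⟨hp1, hp2⟩ := hp'
    have hinj : Function.Injective (fun y : ℝ => (y - p.2) / p.1) := by
      intro a b hab
      simp only [div_eq_div_iff hp1 hp1] at hab
      have := mul_right_cancel₀ hp1 hab
      linarith
    have himg : A.image (fun y => (y - p.2) / p.1) = A :=
      Finset.eq_of_subset_of_card_le (Finset.image_subset_iff.2 fun y hy => hp2 y hy)
        (le_of_eq (Finset.card_image_of_injective _ hinj).symm)
    have hsum : ∑ y ∈ A, (y - p.2) / p.1 = ∑ y ∈ A, y := by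
      conv_rhs => rw [← himg]
      rw [Finset.sum_image (fun a _ b _ h => hinj h)]
    have hcard : (A.card : ℝ) ≠ 0 :=
      Nat.cast_ne_zero.2 (Finset.card_pos.2 hAne).ne'
    have hL : ∑ y ∈ A, (y - p.2) / p.1
        = ((∑ y ∈ A, y) - A.card * p.2) / p.1 := by
      rw [← Finset.sum_div, Finset.sum_sub_distrib, Finset.sum_const, nsmul_eq_mul]
    have hkey : (∑ y ∈ A, y) - A.card * p.2 = p.1 * (∑ y ∈ A, y) := by
      have h' := hsum
      rw [hL, div_eq_iff hp1] at h'
      linarith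
    rw [hc]
    field_simp
    linarith
  have hone : μ {ω | Q 0 ω + M 0 ω * c = c} = 1 := by
    have hmeas : MeasurableSet {p : ℝ × ℝ | p.2 + p.1 * c = c} :=
      measurableSet_eq_fun (measurable_snd.add (measurable_fst.mul measurable_const))
        measurable_const
    have hν1 : ν {p : ℝ × ℝ | p.2 + p.1 * c = c} = 1 := by
      rw [← prob_compl_eq_zero_iff hmeas]
      exact ae_iff.1 hfinal
    rw [← hν1, hνdef, Measure.map_apply (hP 0) hmeas]
    rfl
  exact absurd hone (hdegen c).ne
end

section
/- Assume P{M = 0} = 0, P{Q = 0} < 1, and P{Q + Mc = c} < 1 for every c ∈ ℝ. Then for any p > 0, the conditions (E|M|^p < 1 and E|Q|^p < ∞) and E[ (Σ_{n≥1} Π_{n−1}² Q_n²)^{p/2} ] < ∞ are equivalent. -/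
open MeasureTheory ProbabilityTheory Filter Finset Real
open scoped ENNReal NNReal Topology

lemma aux_prod_lintegral {Ω : Type*} [MeasurableSpace Ω] {μ : Measure Ω} [IsProbabilityMeasure μ]
    (g : ℕ → Ω → ℝ≥0∞) (hg : ∀ i, Measurable (g i))
    (hind : iIndepFun g μ) (n : ℕ) :
    ∫⁻ ω, ∏ i ∈ Finset.range n, g i ω ∂μ = ∏ i ∈ Finset.range n, ∫⁻ ω, g i ω ∂μ := by
  induction n with
  | zero => simp
  | succ n ih =>
    have hin : IndepFun (∏ i ∈ Finset.range n, g i) (g n) μ :=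
      hind.indepFun_prod_range_succ hg n
    have hfm : Measurable (∏ i ∈ Finset.range n, g i) := by
      rw [Finset.prod_fn]
      exact Finset.measurable_prod _ (fun i _ => hg i)
    have hmul := lintegral_mul_eq_lintegral_mul_lintegral_of_indepFun hfm (hg n) hin
    calc ∫⁻ ω, ∏ i ∈ Finset.range (n+1), g i ω ∂μ
        = ∫⁻ ω, ((∏ i ∈ Finset.range n, g i) * g n) ω ∂μ := by
          refine lintegral_congr fun ω => ?_
          simp [Finset.prod_apply, Finset.prod_range_succ]
      _ = (∫⁻ ω, (∏ i ∈ Finset.range n, g i) ω ∂μ) * ∫⁻ ω, g n ω ∂μ := hmul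
      _ = ∏ i ∈ Finset.range (n+1), ∫⁻ ω, g i ω ∂μ := by
          rw [Finset.prod_range_succ, ← ih]
          congr 1
          refine lintegral_congr fun ω => ?_
          simp [Finset.prod_apply]

lemma aux_sq_rpow (p : ℝ) (hp : 0 < p) (x : ℝ) :
    ENNReal.ofReal (x ^ 2) ^ (p / 2) = ENNReal.ofReal (|x| ^ p) := by
  rw [ENNReal.ofReal_rpow_of_nonneg (sq_nonneg x) (by positivity)]
  congr 1
  rw [← sq_abs, ← Real.rpow_natCast |x| 2, ← Real.rpow_mul (abs_nonneg x)]
  norm_num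
  congr 1
  ring

lemma aux_ofReal_abs_prod (p : ℝ) {n : ℕ} (f : ℕ → ℝ) (q : ℝ) :
    ENNReal.ofReal (|(∏ i ∈ Finset.range n, f i) * q| ^ p)
      = (∏ i ∈ Finset.range n, ENNReal.ofReal (|f i| ^ p)) * ENNReal.ofReal (|q| ^ p) := by
  rw [abs_mul, Real.mul_rpow (abs_nonneg _) (abs_nonneg _), Finset.abs_prod,
    ← Real.finset_prod_rpow _ _ (fun i _ => abs_nonneg _) p,
    ENNReal.ofReal_mul (by positivity), ENNReal.ofReal_prod_of_nonneg (fun i _ => by positivity)]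


lemma aux_key_integral {Ω : Type*} [MeasurableSpace Ω] (μ : Measure Ω) [IsProbabilityMeasure μ]
    (M Q : ℕ → Ω → ℝ) (hM : ∀ n, Measurable (M n)) (hQ : ∀ n, Measurable (Q n))
    (hindep : iIndepFun (fun n ω => (M n ω, Q n ω)) μ)
    (hident : ∀ n, IdentDistrib (fun ω => (M n ω, Q n ω)) (fun ω => (M 0 ω, Q 0 ω)) μ μ)
    (p : ℝ) (hp : 0 < p) (n : ℕ) :
    ∫⁻ ω, ENNReal.ofReal (|(∏ i ∈ Finset.range n, M i ω) * Q n ω| ^ p) ∂μ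
      = (∫⁻ ω, ENNReal.ofReal (|M 0 ω| ^ p) ∂μ) ^ n * ∫⁻ ω, ENNReal.ofReal (|Q 0 ω| ^ p) ∂μ := by
  classical
  set φ : ℕ → ℝ × ℝ → ℝ≥0∞ := fun i x =>
    if i < n then ENNReal.ofReal (|x.1| ^ p) else ENNReal.ofReal (|x.2| ^ p) with hφdef
  have hu1 : Measurable (fun x : ℝ × ℝ => ENNReal.ofReal (|x.1| ^ p)) :=
    ((Real.continuous_rpow_const (le_of_lt hp)).measurable.comp measurable_fst.abs).ennreal_ofReal
  have hu2 : Measurable (fun x : ℝ × ℝ => ENNReal.ofReal (|x.2| ^ p)) :=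
    ((Real.continuous_rpow_const (le_of_lt hp)).measurable.comp measurable_snd.abs).ennreal_ofReal
  have hφm : ∀ i, Measurable (φ i) := by
    intro i
    by_cases h : i < n <;> simp only [hφdef, h, if_true, if_false] <;> [exact hu1; exact hu2]
  set g : ℕ → Ω → ℝ≥0∞ := fun i ω => φ i (M i ω, Q i ω) with hgdef
  have hgind : iIndepFun g μ := hindep.comp φ hφm
  have hgm : ∀ i, Measurable (g i) := fun i => (hφm i).comp ((hM i).prodMk (hQ i))
  have hpt : ∀ ω, ENNReal.ofReal (|(∏ i ∈ Finset.range n, M i ω) * Q n ω| ^ p)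
      = ∏ i ∈ Finset.range (n + 1), g i ω := by
    intro ω
    rw [aux_ofReal_abs_prod, Finset.prod_range_succ]
    congr 1
    · refine Finset.prod_congr rfl fun i hi => ?_
      have : i < n := Finset.mem_range.mp hi
      simp [hgdef, hφdef, this]
    · simp [hgdef, hφdef]
  have hMint : ∀ i, i < n → ∫⁻ ω, g i ω ∂μ = ∫⁻ ω, ENNReal.ofReal (|M 0 ω| ^ p) ∂μ := by
    intro i hi
    have h1 : IdentDistrib (fun ω => ENNReal.ofReal (|M i ω| ^ p))
        (fun ω => ENNReal.ofReal (|M 0 ω| ^ p)) μ μ := (hident i).comp hu1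
    have := h1.lintegral_eq
    calc ∫⁻ ω, g i ω ∂μ = ∫⁻ ω, ENNReal.ofReal (|M i ω| ^ p) ∂μ := by
          refine lintegral_congr fun ω => ?_; simp [hgdef, hφdef, hi]
      _ = _ := this
  have hQint : ∫⁻ ω, g n ω ∂μ = ∫⁻ ω, ENNReal.ofReal (|Q 0 ω| ^ p) ∂μ := by
    have h1 : IdentDistrib (fun ω => ENNReal.ofReal (|Q n ω| ^ p))
        (fun ω => ENNReal.ofReal (|Q 0 ω| ^ p)) μ μ := (hident n).comp hu2
    have := h1.lintegral_eq
    calc ∫⁻ ω, g n ω ∂μ = ∫⁻ ω, ENNReal.ofReal (|Q n ω| ^ p) ∂μ := by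
          refine lintegral_congr fun ω => ?_; simp [hgdef, hφdef]
      _ = _ := this
  calc ∫⁻ ω, ENNReal.ofReal (|(∏ i ∈ Finset.range n, M i ω) * Q n ω| ^ p) ∂μ
      = ∫⁻ ω, ∏ i ∈ Finset.range (n + 1), g i ω ∂μ := lintegral_congr hpt
    _ = ∏ i ∈ Finset.range (n + 1), ∫⁻ ω, g i ω ∂μ :=
        aux_prod_lintegral g hgm hgind (n + 1)
    _ = (∏ i ∈ Finset.range n, ∫⁻ ω, g i ω ∂μ) * ∫⁻ ω, g n ω ∂μ := Finset.prod_range_succ _ n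
    _ = (∫⁻ ω, ENNReal.ofReal (|M 0 ω| ^ p) ∂μ) ^ n * ∫⁻ ω, ENNReal.ofReal (|Q 0 ω| ^ p) ∂μ := by
        rw [hQint]
        congr 1
        rw [Finset.prod_congr rfl fun i hi => hMint i (Finset.mem_range.mp hi),
          Finset.prod_const, Finset.card_range]


/-- finite subadditivity of `x ^ q` on `ℝ≥0∞` for `0 < q ≤ 1` -/
lemma aux_rpow_sum_le {q : ℝ} (hq : 0 < q) (hq1 : q ≤ 1) (s : Finset ℕ) (f : ℕ → ℝ≥0∞) :
    (∑ i ∈ s, f i) ^ q ≤ ∑ i ∈ s, f i ^ q := by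
  classical
  induction s using Finset.cons_induction with
  | empty => simp [ENNReal.zero_rpow_of_pos hq]
  | cons a s ha ih =>
    rw [Finset.sum_cons, Finset.sum_cons]
    exact le_trans (ENNReal.rpow_add_le_add_rpow _ _ hq.le hq1) (add_le_add_right ih _)

/-- Under `P{M = 0} = 0`, `P{Q = 0} < 1` and `P{Q + Mc = c} < 1` for all `c`, for any
`p > 0`: `E|M|^p < 1` and `E|Q|^p < ∞` hold iff `E[(Σ_{n≥1} Π_{n-1}² Q_n²)^{p/2}] < ∞`. -/
theorem perpetuity_moment_square_function
    {Ω : Type*} [MeasurableSpace Ω] (μ : Measure Ω) [IsProbabilityMeasure μ]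
    (M Q : ℕ → Ω → ℝ)
    (hM : ∀ n, Measurable (M n)) (hQ : ∀ n, Measurable (Q n))
    (hindep : iIndepFun (fun n ω => (M n ω, Q n ω)) μ)
    (hident : ∀ n, IdentDistrib (fun ω => (M n ω, Q n ω)) (fun ω => (M 0 ω, Q 0 ω)) μ μ)
    (hM0 : μ {ω | M 0 ω = 0} = 0)
    (hQ0 : μ {ω | Q 0 ω = 0} < 1)
    (hdegen : ∀ c : ℝ, μ {ω | Q 0 ω + M 0 ω * c = c} < 1)
    (p : ℝ) (hp : 0 < p) :
    (∫⁻ ω, ENNReal.ofReal (|M 0 ω| ^ p) ∂μ < 1 ∧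
      ∫⁻ ω, ENNReal.ofReal (|Q 0 ω| ^ p) ∂μ < ⊤) ↔
    ∫⁻ ω, (∑' n, ENNReal.ofReal
        (((∏ i ∈ Finset.range n, M i ω) * Q n ω) ^ 2)) ^ (p / 2) ∂μ < ⊤ := by
  classical
  have hq : 0 < p / 2 := by positivity
  set r : ℝ≥0∞ := ∫⁻ ω, ENNReal.ofReal (|M 0 ω| ^ p) ∂μ with hrdef
  set c : ℝ≥0∞ := ∫⁻ ω, ENNReal.ofReal (|Q 0 ω| ^ p) ∂μ with hcdef
  set T : ℕ → Ω → ℝ≥0∞ :=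
    fun n ω => ENNReal.ofReal (((∏ i ∈ Finset.range n, M i ω) * Q n ω) ^ 2) with hTdef
  have hTm : ∀ n, Measurable (T n) := by
    intro n
    exact (((Finset.measurable_prod _ (fun i _ => hM i)).mul (hQ n)).pow_const 2).ennreal_ofReal
  have hTq : ∀ n, ∫⁻ ω, T n ω ^ (p / 2) ∂μ = r ^ n * c := by
    intro n
    rw [lintegral_congr (fun ω => aux_sq_rpow p hp _)]
    exact aux_key_integral μ M Q hM hQ hindep hident p hp n
  have hTqm : ∀ n, Measurable fun ω => T n ω ^ (p / 2) :=
    fun n => ENNReal.continuous_rpow_const.measurable.comp (hTm n)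
  set S : Ω → ℝ≥0∞ := fun ω => ∑' n, T n ω with hSdef
  have hSm : Measurable S := Measurable.ennreal_tsum hTm
  have hSqm : Measurable fun ω => S ω ^ (p / 2) :=
    ENNReal.continuous_rpow_const.measurable.comp hSm
  constructor
  · rintro ⟨hr1, hc⟩
    rcases le_or_gt (p / 2) 1 with hle | hgt
    · -- case p ≤ 2 : subadditivity
      have hsub : ∀ ω, S ω ^ (p / 2) ≤ ∑' n, T n ω ^ (p / 2) := by
        intro ω
        have htend : Tendsto (fun N => (∑ i ∈ Finset.range N, T i ω) ^ (p / 2)) atTop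
            (𝓝 (S ω ^ (p / 2))) := (ENNReal.tendsto_nat_tsum (T · ω)).ennrpow_const _
        refine le_of_tendsto htend (Eventually.of_forall fun N => ?_)
        exact le_trans (aux_rpow_sum_le hq hle _ _)
          (ENNReal.sum_le_tsum (f := fun n => T n ω ^ (p / 2)) _)
      calc ∫⁻ ω, S ω ^ (p / 2) ∂μ ≤ ∫⁻ ω, ∑' n, T n ω ^ (p / 2) ∂μ := lintegral_mono hsub
        _ = ∑' n, ∫⁻ ω, T n ω ^ (p / 2) ∂μ := lintegral_tsum fun n => (hTqm n).aemeasurable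
        _ = (∑' n, r ^ n) * c := by
            simp_rw [hTq]; exact ENNReal.tsum_mul_right
        _ = (1 - r)⁻¹ * c := by rw [ENNReal.tsum_geometric]
        _ < ⊤ := by
            refine ENNReal.mul_lt_top ?_ hc
            rw [ENNReal.inv_lt_top]
            exact tsub_pos_of_lt hr1
    · -- case p > 2 : Minkowski
      have hq1 : (1 : ℝ) ≤ p / 2 := hgt.le
      have hqne : (p / 2) ≠ 0 := hq.ne'
      set r' : ℝ≥0∞ := r ^ (1 / (p / 2)) with hr'def
      set c' : ℝ≥0∞ := c ^ (1 / (p / 2)) with hc'def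
      have hterm' : ∀ i : ℕ, (∫⁻ ω, T i ω ^ (p / 2) ∂μ) ^ (1 / (p / 2)) = r' ^ i * c' := by
        intro i
        rw [hTq i, ENNReal.mul_rpow_of_nonneg _ _ (one_div_pos.mpr hq).le]
        congr 1
        rw [← ENNReal.rpow_natCast r i, ← ENNReal.rpow_mul, mul_comm, ENNReal.rpow_mul,
          ENNReal.rpow_natCast]
      have hFm : ∀ N, Measurable fun ω => ∑ i ∈ Finset.range N, T i ω :=
        fun N => Finset.measurable_sum _ (fun i _ => hTm i)
      have mink : ∀ N, (∫⁻ ω, (∑ i ∈ Finset.range N, T i ω) ^ (p / 2) ∂μ) ^ (1 / (p / 2))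
          ≤ ∑ i ∈ Finset.range N, r' ^ i * c' := by
        intro N
        induction N with
        | zero =>
          have h0 : ∫⁻ ω, (∑ i ∈ Finset.range 0, T i ω) ^ (p / 2) ∂μ = 0 := by
            simp [ENNReal.zero_rpow_of_pos hq, hp]
          rw [h0]
          simp [ENNReal.zero_rpow_of_pos (one_div_pos.mpr hq), hp]
        | succ N ih =>
          have hstep := ENNReal.lintegral_Lp_add_le
            (hFm N).aemeasurable (hTm N).aemeasurable hq1 (μ := μ)
          have heq : ∫⁻ ω, (∑ i ∈ Finset.range (N + 1), T i ω) ^ (p / 2) ∂μ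
              = ∫⁻ ω, ((fun ω => ∑ i ∈ Finset.range N, T i ω) + T N) ω ^ (p / 2) ∂μ := by
            refine lintegral_congr fun ω => ?_
            simp [Finset.sum_range_succ]
          rw [heq, Finset.sum_range_succ]
          exact le_trans hstep (add_le_add ih (le_of_eq (hterm' N)))
      set C : ℝ≥0∞ := (1 - r')⁻¹ * c' with hCdef
      have hgeo : ∀ N, ∑ i ∈ Finset.range N, r' ^ i * c' ≤ C := by
        intro N
        rw [← Finset.sum_mul]
        refine mul_le_mul' ?_ le_rfl
        refine le_trans (ENNReal.sum_le_tsum _) ?_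
        rw [ENNReal.tsum_geometric]
      have hC : C < ⊤ := by
        have hr'1 : r' < 1 := ENNReal.rpow_lt_one hr1 (one_div_pos.mpr hq)
        have hc' : c' < ⊤ := ENNReal.rpow_lt_top_of_nonneg (one_div_pos.mpr hq).le hc.ne
        refine ENNReal.mul_lt_top ?_ hc'
        rw [ENNReal.inv_lt_top]
        exact tsub_pos_of_lt hr'1
      have hbound : ∀ N, ∫⁻ ω, (∑ i ∈ Finset.range N, T i ω) ^ (p / 2) ∂μ ≤ C ^ (p / 2) := by
        intro N
        have h1 := le_trans (mink N) (hgeo N)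
        have h2 := ENNReal.rpow_le_rpow h1 (le_of_lt hq)
        rwa [← ENNReal.rpow_mul, one_div_mul_cancel hqne, ENNReal.rpow_one] at h2
      have hmono : Monotone fun N => (fun ω => (∑ i ∈ Finset.range N, T i ω) ^ (p / 2)) := by
        intro N N' h ω
        exact ENNReal.rpow_le_rpow
          (Finset.sum_le_sum_of_subset (Finset.range_subset_range.2 h)) hq.le
      have hptsup : ∀ ω, ⨆ N, (∑ i ∈ Finset.range N, T i ω) ^ (p / 2) = S ω ^ (p / 2) := by
        intro ω
        have t1 : Tendsto (fun N => (∑ i ∈ Finset.range N, T i ω) ^ (p / 2)) atTop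
            (𝓝 (S ω ^ (p / 2))) := (ENNReal.tendsto_nat_tsum (T · ω)).ennrpow_const _
        have t2 : Tendsto (fun N => (∑ i ∈ Finset.range N, T i ω) ^ (p / 2)) atTop
            (𝓝 (⨆ N, (∑ i ∈ Finset.range N, T i ω) ^ (p / 2))) :=
          tendsto_atTop_iSup (fun N N' h => hmono h ω)
        exact tendsto_nhds_unique t2 t1
      have hmeas2 : ∀ N, Measurable fun ω => (∑ i ∈ Finset.range N, T i ω) ^ (p / 2) :=
        fun N => ENNReal.continuous_rpow_const.measurable.comp (hFm N)
      have key := lintegral_iSup (μ := μ)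
        (f := fun N ω => (∑ i ∈ Finset.range N, T i ω) ^ (p / 2)) hmeas2 hmono
      have : ∫⁻ ω, S ω ^ (p / 2) ∂μ
          = ⨆ N, ∫⁻ ω, (∑ i ∈ Finset.range N, T i ω) ^ (p / 2) ∂μ := by
        rw [← key]
        exact lintegral_congr fun ω => (hptsup ω).symm
      rw [this]
      exact lt_of_le_of_lt (iSup_le hbound)
        (ENNReal.rpow_lt_top_of_nonneg hq.le hC.ne)
  · intro hfin
    have hTleS : ∀ n ω, T n ω ≤ S ω := fun n ω => ENNReal.le_tsum n
    have htermle : ∀ n, ∫⁻ ω, T n ω ^ (p / 2) ∂μ ≤ ∫⁻ ω, S ω ^ (p / 2) ∂μ :=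
      fun n => lintegral_mono fun ω => ENNReal.rpow_le_rpow (hTleS n ω) hq.le
    -- c < ⊤
    have hcfin : c < ⊤ := by
      have h0 := hTq 0
      rw [pow_zero, one_mul] at h0
      exact lt_of_le_of_lt (h0 ▸ htermle 0) hfin
    -- c ≠ 0
    have hcpos : c ≠ 0 := by
      intro h0
      have hmeas : Measurable fun ω => ENNReal.ofReal (|Q 0 ω| ^ p) :=
        ((Real.continuous_rpow_const hp.le).measurable.comp (hQ 0).abs).ennreal_ofReal
      have hae : (fun ω => ENNReal.ofReal (|Q 0 ω| ^ p)) =ᵐ[μ] 0 :=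
        (lintegral_eq_zero_iff hmeas).mp h0
      have hae2 : ∀ᵐ ω ∂μ, Q 0 ω = 0 := by
        filter_upwards [hae] with ω hω
        by_contra hne
        have habs : 0 < |Q 0 ω| := abs_pos.mpr hne
        have : 0 < |Q 0 ω| ^ p := Real.rpow_pos_of_pos habs p
        simp only [Pi.zero_apply, ENNReal.ofReal_eq_zero] at hω
        linarith
      have : μ {ω | Q 0 ω = 0} = 1 := by
        rw [← measure_univ (μ := μ)]
        refine measure_congr ?_
        rw [Filter.eventuallyEq_set]
        filter_upwards [hae2] with ω hω
        simp [hω]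
      rw [this] at hQ0
      exact lt_irrefl _ hQ0
    -- S < ⊤ a.e.
    have hSae : ∀ᵐ ω ∂μ, S ω ≠ ⊤ := by
      have := ae_lt_top hSqm hfin.ne
      filter_upwards [this] with ω hω htop
      rw [htop, ENNReal.top_rpow_of_pos hq] at hω
      exact lt_irrefl _ hω
    -- dominated convergence
    have htend0 : Tendsto (fun n => ∫⁻ ω, T n ω ^ (p / 2) ∂μ) atTop (𝓝 0) := by
      have h := tendsto_lintegral_of_dominated_convergence (μ := μ)
        (F := fun n ω => T n ω ^ (p / 2)) (f := fun _ => 0)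
        (bound := fun ω => S ω ^ (p / 2)) hTqm
        (fun n => Eventually.of_forall fun ω =>
          ENNReal.rpow_le_rpow (hTleS n ω) hq.le) hfin.ne ?_
      · simpa using h
      · filter_upwards [hSae] with ω hω
        have ht : Tendsto (fun n => T n ω) atTop (𝓝 0) :=
          ENNReal.tendsto_atTop_zero_of_tsum_ne_top hω
        have := ht.ennrpow_const (p / 2)
        rwa [ENNReal.zero_rpow_of_pos hq] at this
    have htendr : Tendsto (fun n : ℕ => r ^ n * c) atTop (𝓝 0) := by
      have : (fun n : ℕ => r ^ n * c) = fun n => ∫⁻ ω, T n ω ^ (p / 2) ∂μ := by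
        funext n; exact (hTq n).symm
      rw [this]; exact htend0
    have htendrn : Tendsto (fun n : ℕ => r ^ n) atTop (𝓝 0) := by
      have hci : c⁻¹ ≠ ⊤ := by
        rw [Ne, ENNReal.inv_eq_top]
        exact hcpos
      have h := ENNReal.Tendsto.mul_const htendr (Or.inr hci)
      rw [zero_mul] at h
      have heq : (fun n : ℕ => r ^ n * c * c⁻¹) = fun n : ℕ => r ^ n := by
        funext n
        rw [mul_assoc, ENNReal.mul_inv_cancel hcpos hcfin.ne, mul_one]
      rwa [heq] at h
    have hr1 : r < 1 := by
      by_contra hge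
      push_neg at hge
      have hone : ∀ n : ℕ, (1 : ℝ≥0∞) ≤ r ^ n := fun n => one_le_pow_of_one_le' hge n
      have := htendrn.eventually_lt_const (zero_lt_one (α := ℝ≥0∞))
      rcases this.exists with ⟨n, hn⟩
      exact absurd (hone n) (not_le.mpr hn)
    exact ⟨hr1, hcfin⟩
end

section
/- Let (M₁, Q₁) and (M₂, Q₂) be independent copies of the ℝ²-valued random vector (M, Q), and let p > 0. Then the conditions (E|Q|^p < ∞ and E|M|^p < 1) and (E|Q₁ + M₁ Q₂|^p < ∞ and E|M₁ M₂|^p < 1) are equivalent. -/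
open MeasureTheory ProbabilityTheory Filter Finset Real

private lemma abs_add_rpow_le {p : ℝ} (hp : 0 < p) (x y : ℝ) :
    |x + y| ^ p ≤ 2 ^ p * (|x| ^ p + |y| ^ p) := by
  have h1 : |x + y| ≤ 2 * max |x| |y| := by
    refine (abs_add_le x y).trans ?_
    rw [two_mul]
    exact add_le_add (le_max_left _ _) (le_max_right _ _)
  have h2 : |x + y| ^ p ≤ (2 * max |x| |y|) ^ p :=
    Real.rpow_le_rpow (abs_nonneg _) h1 hp.le
  rw [Real.mul_rpow (by norm_num) (le_max_of_le_left (abs_nonneg x))] at h2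
  refine h2.trans (mul_le_mul_of_nonneg_left ?_ (Real.rpow_nonneg (by norm_num) _))
  rcases le_total |x| |y| with h | h
  · rw [max_eq_right h]
    exact le_add_of_nonneg_left (Real.rpow_nonneg (abs_nonneg _) _)
  · rw [max_eq_left h]
    exact le_add_of_nonneg_right (Real.rpow_nonneg (abs_nonneg _) _)

private lemma ofReal_abs_add_rpow_le {p : ℝ} (hp : 0 < p) (x y : ℝ) :
    ENNReal.ofReal (|x + y| ^ p) ≤
      ENNReal.ofReal (2 ^ p) *
        (ENNReal.ofReal (|x| ^ p) + ENNReal.ofReal (|y| ^ p)) := by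
  rw [← ENNReal.ofReal_add (Real.rpow_nonneg (abs_nonneg _) _)
      (Real.rpow_nonneg (abs_nonneg _) _),
    ← ENNReal.ofReal_mul (Real.rpow_nonneg (by norm_num) _)]
  exact ENNReal.ofReal_le_ofReal (abs_add_rpow_le hp x y)

private lemma ofReal_abs_mul_rpow {p : ℝ} (x y : ℝ) :
    ENNReal.ofReal (|x * y| ^ p) =
      ENNReal.ofReal (|x| ^ p) * ENNReal.ofReal (|y| ^ p) := by
  rw [abs_mul, Real.mul_rpow (abs_nonneg _) (abs_nonneg _),
    ENNReal.ofReal_mul (Real.rpow_nonneg (abs_nonneg _) _)]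

/-- For independent copies `(M₁, Q₁)` and `(M₂, Q₂)` of `(M, Q)` and `p > 0`:
`E|Q|^p < ∞ ∧ E|M|^p < 1` holds iff `E|Q₁ + M₁ Q₂|^p < ∞ ∧ E|M₁ M₂|^p < 1`. -/
theorem moment_condition_two_step_equiv
    {Ω : Type*} [MeasurableSpace Ω] (μ : Measure Ω) [IsProbabilityMeasure μ]
    (M Q M₁ Q₁ M₂ Q₂ : Ω → ℝ)
    (hM : Measurable M) (hQ : Measurable Q)
    (hM₁ : Measurable M₁) (hQ₁ : Measurable Q₁)
    (hM₂ : Measurable M₂) (hQ₂ : Measurable Q₂)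
    (hindep : IndepFun (fun ω => (M₁ ω, Q₁ ω)) (fun ω => (M₂ ω, Q₂ ω)) μ)
    (hid₁ : IdentDistrib (fun ω => (M₁ ω, Q₁ ω)) (fun ω => (M ω, Q ω)) μ μ)
    (hid₂ : IdentDistrib (fun ω => (M₂ ω, Q₂ ω)) (fun ω => (M ω, Q ω)) μ μ)
    (p : ℝ) (hp : 0 < p) :
    (∫⁻ ω, ENNReal.ofReal (|Q ω| ^ p) ∂μ < ⊤ ∧
      ∫⁻ ω, ENNReal.ofReal (|M ω| ^ p) ∂μ < 1) ↔
    (∫⁻ ω, ENNReal.ofReal (|Q₁ ω + M₁ ω * Q₂ ω| ^ p) ∂μ < ⊤ ∧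
      ∫⁻ ω, ENNReal.ofReal (|M₁ ω * M₂ ω| ^ p) ∂μ < 1) := by
  -- the function x ↦ ofReal (|x|^p)
  set F : ℝ → ENNReal := fun x => ENNReal.ofReal (|x| ^ p) with hF
  have hFm : Measurable F :=
    ENNReal.measurable_ofReal.comp
      ((Real.continuous_rpow_const hp.le).comp continuous_abs).measurable
  set a : ENNReal := ∫⁻ ω, F (M ω) ∂μ with ha
  set q : ENNReal := ∫⁻ ω, F (Q ω) ∂μ with hq'
  -- identical distribution of marginals
  have hidM₁ : IdentDistrib M₁ M μ μ := hid₁.comp measurable_fst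
  have hidQ₁ : IdentDistrib Q₁ Q μ μ := hid₁.comp measurable_snd
  have hidM₂ : IdentDistrib M₂ M μ μ := hid₂.comp measurable_fst
  have hidQ₂ : IdentDistrib Q₂ Q μ μ := hid₂.comp measurable_snd
  have hIM₁ : ∫⁻ ω, F (M₁ ω) ∂μ = a := (hidM₁.comp hFm).lintegral_eq
  have hIQ₁ : ∫⁻ ω, F (Q₁ ω) ∂μ = q := (hidQ₁.comp hFm).lintegral_eq
  have hIM₂ : ∫⁻ ω, F (M₂ ω) ∂μ = a := (hidM₂.comp hFm).lintegral_eq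
  have hIQ₂ : ∫⁻ ω, F (Q₂ ω) ∂μ = q := (hidQ₂.comp hFm).lintegral_eq
  -- independence of components
  have hindMM : IndepFun M₁ M₂ μ := hindep.comp measurable_fst measurable_fst
  have hindMQ : IndepFun M₁ Q₂ μ := hindep.comp measurable_fst measurable_snd
  -- product formulas
  have hMM : ∫⁻ ω, F (M₁ ω * M₂ ω) ∂μ = a * a := by
    have hmul : ∫⁻ ω, F (M₁ ω) * F (M₂ ω) ∂μ =
        (∫⁻ ω, F (M₁ ω) ∂μ) * ∫⁻ ω, F (M₂ ω) ∂μ :=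
      lintegral_mul_eq_lintegral_mul_lintegral_of_indepFun''
        (hFm.comp hM₁).aemeasurable (hFm.comp hM₂).aemeasurable
        (hindMM.comp hFm hFm)
    calc ∫⁻ ω, F (M₁ ω * M₂ ω) ∂μ = ∫⁻ ω, F (M₁ ω) * F (M₂ ω) ∂μ :=
          lintegral_congr fun ω => ofReal_abs_mul_rpow (M₁ ω) (M₂ ω)
      _ = (∫⁻ ω, F (M₁ ω) ∂μ) * ∫⁻ ω, F (M₂ ω) ∂μ := hmul
      _ = a * a := by rw [hIM₁, hIM₂]
  have hMQ : ∫⁻ ω, F (M₁ ω * Q₂ ω) ∂μ = a * q := by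
    have hmul : ∫⁻ ω, F (M₁ ω) * F (Q₂ ω) ∂μ =
        (∫⁻ ω, F (M₁ ω) ∂μ) * ∫⁻ ω, F (Q₂ ω) ∂μ :=
      lintegral_mul_eq_lintegral_mul_lintegral_of_indepFun''
        (hFm.comp hM₁).aemeasurable (hFm.comp hQ₂).aemeasurable
        (hindMQ.comp hFm hFm)
    calc ∫⁻ ω, F (M₁ ω * Q₂ ω) ∂μ = ∫⁻ ω, F (M₁ ω) * F (Q₂ ω) ∂μ :=
          lintegral_congr fun ω => ofReal_abs_mul_rpow (M₁ ω) (Q₂ ω)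
      _ = (∫⁻ ω, F (M₁ ω) ∂μ) * ∫⁻ ω, F (Q₂ ω) ∂μ := hmul
      _ = a * q := by rw [hIM₁, hIQ₂]
  have haa : a < 1 ↔ a * a < 1 := by
    constructor
    · intro h
      have : a * a ≤ a := by
        calc a * a ≤ 1 * a := mul_le_mul' h.le le_rfl
        _ = a := one_mul a
      exact lt_of_le_of_lt this h
    · intro h
      by_contra hc
      push_neg at hc
      have h11 : (1 : ENNReal) * 1 ≤ a * a := mul_le_mul' hc hc
      rw [one_mul] at h11
      exact absurd h (not_lt.mpr h11)
  constructor
  · rintro ⟨hqf, haf⟩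
    have hqf' : q < ⊤ := hqf
    have haf' : a < 1 := haf
    refine ⟨?_, ?_⟩
    · show ∫⁻ ω, F (Q₁ ω + M₁ ω * Q₂ ω) ∂μ < ⊤
      have hbound : ∀ ω, F (Q₁ ω + M₁ ω * Q₂ ω) ≤
          ENNReal.ofReal (2 ^ p) * (F (Q₁ ω) + F (M₁ ω * Q₂ ω)) := fun ω =>
        ofReal_abs_add_rpow_le hp _ _
      calc ∫⁻ ω, F (Q₁ ω + M₁ ω * Q₂ ω) ∂μ
          ≤ ∫⁻ ω, ENNReal.ofReal (2 ^ p) * (F (Q₁ ω) + F (M₁ ω * Q₂ ω)) ∂μ :=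
            lintegral_mono hbound
        _ = ENNReal.ofReal (2 ^ p) *
            ∫⁻ ω, (F (Q₁ ω) + F (M₁ ω * Q₂ ω)) ∂μ :=
            lintegral_const_mul' _ _ ENNReal.ofReal_ne_top
        _ = ENNReal.ofReal (2 ^ p) * (q + a * q) := by
            have hadd : ∫⁻ ω, (F (Q₁ ω) + F (M₁ ω * Q₂ ω)) ∂μ =
                (∫⁻ ω, F (Q₁ ω) ∂μ) + ∫⁻ ω, F (M₁ ω * Q₂ ω) ∂μ :=
              lintegral_add_left (hFm.comp hQ₁) _
            rw [hadd, hIQ₁, hMQ]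
        _ < ⊤ := ENNReal.mul_lt_top ENNReal.ofReal_lt_top
            (ENNReal.add_lt_top.mpr
              ⟨hqf', ENNReal.mul_lt_top (haf'.trans ENNReal.one_lt_top) hqf'⟩)
    · show ∫⁻ ω, F (M₁ ω * M₂ ω) ∂μ < 1
      rw [hMM]
      exact haa.mp haf'
  · rintro ⟨hFf, hMf⟩
    have hMf' : ∫⁻ ω, F (M₁ ω * M₂ ω) ∂μ < 1 := hMf
    rw [hMM] at hMf'
    have haf : a < 1 := haa.mpr hMf'
    refine ⟨?_, haf⟩
    show q < ⊤
    by_contra hqc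
    push_neg at hqc
    have hqtop : q = ⊤ := top_le_iff.mp hqc
    set f : ℝ → ENNReal := fun c => ∫⁻ ω, F (Q₁ ω + M₁ ω * c) ∂μ with hf
    -- if q = ⊤ then f c = ⊤ for every c
    have hfc : ∀ c, f c = ⊤ := by
      intro c
      by_contra hfcne
      have hMc : ∫⁻ ω, F (M₁ ω * c) ∂μ = a * ENNReal.ofReal (|c| ^ p) := by
        have hmc : ∫⁻ ω, F (M₁ ω) * ENNReal.ofReal (|c| ^ p) ∂μ =
            (∫⁻ ω, F (M₁ ω) ∂μ) * ENNReal.ofReal (|c| ^ p) :=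
          lintegral_mul_const' _ _ ENNReal.ofReal_ne_top
        calc ∫⁻ ω, F (M₁ ω * c) ∂μ = ∫⁻ ω, F (M₁ ω) * ENNReal.ofReal (|c| ^ p) ∂μ :=
              lintegral_congr fun ω => ofReal_abs_mul_rpow (M₁ ω) c
          _ = (∫⁻ ω, F (M₁ ω) ∂μ) * ENNReal.ofReal (|c| ^ p) := hmc
          _ = a * ENNReal.ofReal (|c| ^ p) := by rw [hIM₁]
      have hpt : ∀ ω, F (Q₁ ω) ≤
          ENNReal.ofReal (2 ^ p) * (F (Q₁ ω + M₁ ω * c) + F (M₁ ω * c)) := by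
        intro ω
        have h := ofReal_abs_add_rpow_le hp (Q₁ ω + M₁ ω * c) (-(M₁ ω * c))
        simpa only [add_neg_cancel_right, abs_neg] using h
      have key : q ≤ ENNReal.ofReal (2 ^ p) *
          (f c + a * ENNReal.ofReal (|c| ^ p)) := by
        calc q = ∫⁻ ω, F (Q₁ ω) ∂μ := hIQ₁.symm
          _ ≤ ∫⁻ ω, ENNReal.ofReal (2 ^ p) *
              (F (Q₁ ω + M₁ ω * c) + F (M₁ ω * c)) ∂μ := lintegral_mono hpt
          _ = ENNReal.ofReal (2 ^ p) *
              ∫⁻ ω, (F (Q₁ ω + M₁ ω * c) + F (M₁ ω * c)) ∂μ :=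
              lintegral_const_mul' _ _ ENNReal.ofReal_ne_top
          _ = ENNReal.ofReal (2 ^ p) * (f c + a * ENNReal.ofReal (|c| ^ p)) := by
              have hadd : ∫⁻ ω, (F (Q₁ ω + M₁ ω * c) + F (M₁ ω * c)) ∂μ =
                  (∫⁻ ω, F (Q₁ ω + M₁ ω * c) ∂μ) + ∫⁻ ω, F (M₁ ω * c) ∂μ :=
                lintegral_add_left (hFm.comp (hQ₁.add (hM₁.mul_const c))) _
              rw [hadd, hMc]
      have hqlt : q < ⊤ := lt_of_le_of_lt key
        (ENNReal.mul_lt_top ENNReal.ofReal_lt_top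
          (ENNReal.add_lt_top.mpr
            ⟨lt_top_iff_ne_top.mpr hfcne,
             ENNReal.mul_lt_top (haf.trans ENNReal.one_lt_top) ENNReal.ofReal_lt_top⟩))
      exact absurd hqtop hqlt.ne
    -- Fubini: the lintegral of F (Q₁ + M₁ Q₂) equals ∫ f c dν where ν = law of Q₂
    have hmeas_pair : Measurable fun ω => (M₁ ω, Q₁ ω) := hM₁.prodMk hQ₁
    have hindPQ : IndepFun (fun ω => (M₁ ω, Q₁ ω)) Q₂ μ :=
      hindep.comp measurable_id measurable_snd
    have hmap : μ.map (fun ω => ((M₁ ω, Q₁ ω), Q₂ ω)) =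
        (μ.map (fun ω => (M₁ ω, Q₁ ω))).prod (μ.map Q₂) :=
      (indepFun_iff_map_prod_eq_prod_map_map hmeas_pair.aemeasurable
        hQ₂.aemeasurable).mp hindPQ
    set g : (ℝ × ℝ) × ℝ → ENNReal := fun x => F (x.1.2 + x.1.1 * x.2) with hg
    have hgm : Measurable g :=
      hFm.comp ((measurable_fst.snd).add ((measurable_fst.fst).mul measurable_snd))
    haveI : IsProbabilityMeasure (μ.map (fun ω => (M₁ ω, Q₁ ω))) :=
      Measure.isProbabilityMeasure_map hmeas_pair.aemeasurable
    haveI : IsProbabilityMeasure (μ.map Q₂) :=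
      Measure.isProbabilityMeasure_map hQ₂.aemeasurable
    have hstep : ∫⁻ ω, F (Q₁ ω + M₁ ω * Q₂ ω) ∂μ = ⊤ := by
      have h1 : ∫⁻ ω, F (Q₁ ω + M₁ ω * Q₂ ω) ∂μ =
          ∫⁻ x, g x ∂((μ.map (fun ω => (M₁ ω, Q₁ ω))).prod (μ.map Q₂)) := by
        rw [← hmap, lintegral_map hgm (hmeas_pair.prodMk hQ₂)]
      have h2 : ∫⁻ x, g x ∂((μ.map (fun ω => (M₁ ω, Q₁ ω))).prod (μ.map Q₂)) =
          ∫⁻ c, ∫⁻ y, g (y, c) ∂(μ.map (fun ω => (M₁ ω, Q₁ ω))) ∂(μ.map Q₂) :=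
        lintegral_prod_symm' g hgm
      have h3 : ∀ c : ℝ, ∫⁻ y, g (y, c) ∂(μ.map (fun ω => (M₁ ω, Q₁ ω))) = f c := by
        intro c
        have := lintegral_map (μ := μ) (f := fun y : ℝ × ℝ => g (y, c))
          (g := fun ω => (M₁ ω, Q₁ ω))
          (hgm.comp (measurable_id.prodMk measurable_const)) hmeas_pair
        exact this
      rw [h1, h2, lintegral_congr fun c => h3 c, lintegral_congr hfc]
      simp
    have hFf' : ∫⁻ ω, F (Q₁ ω + M₁ ω * Q₂ ω) ∂μ < ⊤ := hFf
    rw [hstep] at hFf'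
    exact absurd rfl hFf'.ne
end

section
/- Let {(X_k, Y_k) : k ≥ 1} be i.i.d. ℝ²-valued random vectors. Put S₀ = 0, S_n = X₁ + ⋯ + X_n, ξ = sup_{n≥0} S_n and ζ = sup_{n≥0} (S_n + Y_{n+1}). Then for all x, y ∈ ℝ, P{ζ > x} ≥ P{Y₁ > y} · P{ξ > x − y}. -/
open MeasureTheory ProbabilityTheory Filter Finset Real

/-- **Tail inequality.** Let `(X_k, Y_k)` be i.i.d., `S_0 = 0`, `S_n = X_1 + ⋯ + X_n`,
`ξ = sup_{n≥0} S_n` and `ζ = sup_{n≥0} (S_n + Y_{n+1})`. Then for all `x, y ∈ ℝ`: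
`P{ζ > x} ≥ P{Y₁ > y} · P{ξ > x - y}` (with `sup > t` expressed as `∃ n`, term `> t`). -/
theorem sup_random_walk_tail_inequality
    {Ω : Type*} [MeasurableSpace Ω] (μ : Measure Ω) [IsProbabilityMeasure μ]
    (X Y : ℕ → Ω → ℝ)
    (hX : ∀ n, Measurable (X n)) (hY : ∀ n, Measurable (Y n))
    (hindep : iIndepFun (fun n ω => (X n ω, Y n ω)) μ)
    (hident : ∀ n, IdentDistrib (fun ω => (X n ω, Y n ω)) (fun ω => (X 0 ω, Y 0 ω)) μ μ)
    (x y : ℝ) :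
    μ {ω | ∃ n, (∑ i ∈ Finset.range n, X i ω) + Y n ω > x} ≥
      μ {ω | Y 0 ω > y} * μ {ω | ∃ n, (∑ i ∈ Finset.range n, X i ω) > x - y} := by
  classical
  set Z : ℕ → Ω → ℝ × ℝ := fun n ω => (X n ω, Y n ω) with hZ
  have hZm : ∀ n, Measurable (Z n) := fun n => (hX n).prodMk (hY n)
  set S : ℕ → Ω → ℝ := fun n ω => ∑ i ∈ Finset.range n, X i ω with hS
  have hSm : ∀ n, Measurable (S n) := fun n => Finset.measurable_sum _ fun i _ => hX i
  set A : ℕ → Set Ω := fun n => {ω | S n ω > x - y ∧ ∀ m < n, ¬ S m ω > x - y} with hA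
  -- A n as a preimage under the tuple of the first n pairs
  set T := fun (n : ℕ) (ω : Ω) (i : Finset.range n) => Z i ω with hT
  have hTm : ∀ n, Measurable (T n) := fun n => measurable_pi_lambda _ fun i => hZm i
  set g := fun (n m : ℕ) (v : Finset.range n → ℝ × ℝ) =>
    ∑ i ∈ (Finset.range n).attach, (if (i : ℕ) < m then (v i).1 else 0) with hg
  have hgm : ∀ n m, Measurable (g n m) := by
    intro n m
    apply Finset.measurable_sum
    intro i _
    by_cases h : (i : ℕ) < m
    · simp only [h, if_true]
      exact (measurable_pi_apply i).fst
    · simp only [h, if_false]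
      exact measurable_const
  have hcomp : ∀ n m, m ≤ n → ∀ ω, g n m (T n ω) = S m ω := by
    intro n m hmn ω
    have h1 : g n m (T n ω) = ∑ i ∈ Finset.range n, (if i < m then X i ω else 0) := by
      simp only [hg, hT, hZ]
      exact Finset.sum_attach (Finset.range n) (fun i => if i < m then X i ω else 0)
    rw [h1, ← Finset.sum_filter]
    congr 1
    ext i
    simp only [Finset.mem_filter, Finset.mem_range]
    omega
  set B := fun (n : ℕ) =>
    {v : Finset.range n → ℝ × ℝ | g n n v > x - y ∧ ∀ m < n, ¬ g n m v > x - y} with hB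
  have hBm : ∀ n, MeasurableSet (B n) := by
    intro n
    have : B n = {v | x - y < g n n v} ∩ ⋂ m, ⋂ (_ : m < n), {v | x - y < g n m v}ᶜ := by
      ext v
      simp [hB, Set.mem_setOf_eq, Set.mem_iInter]
    rw [this]
    exact (measurableSet_lt measurable_const (hgm n n)).inter
      (MeasurableSet.iInter fun m => MeasurableSet.iInter fun _ =>
        (measurableSet_lt measurable_const (hgm n m)).compl)
  have hApre : ∀ n, A n = T n ⁻¹' B n := by
    intro n
    ext ω
    simp only [hA, hB, Set.mem_setOf_eq, Set.mem_preimage]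
    constructor
    · rintro ⟨h1, h2⟩
      exact ⟨by rwa [hcomp n n le_rfl], fun m hm => by rw [hcomp n m hm.le]; exact h2 m hm⟩
    · rintro ⟨h1, h2⟩
      exact ⟨by rwa [hcomp n n le_rfl] at h1,
        fun m hm => by have := h2 m hm; rwa [hcomp n m hm.le] at this⟩
  have hAm : ∀ n, MeasurableSet (A n) := fun n => (hApre n) ▸ (hTm n) (hBm n)
  -- independence between the tuple and Y n
  have hind : ∀ n, IndepFun (T n) (Y n) μ := by
    intro n
    have h1 := hindep.indepFun_finset (Finset.range n) {n}
      (by simp [Finset.disjoint_singleton_right]) hZm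
    have h2 : Y n = (fun v : ({n} : Finset ℕ) → ℝ × ℝ =>
        (v ⟨n, Finset.mem_singleton_self n⟩).2) ∘ (fun ω (i : ({n} : Finset ℕ)) => Z i ω) := rfl
    rw [h2]
    exact h1.comp measurable_id ((measurable_pi_apply _).snd)
  -- key product formula
  have hprod : ∀ n, μ (A n ∩ {ω | Y n ω > y}) = μ (A n) * μ {ω | Y 0 ω > y} := by
    intro n
    have h1 := (hind n).measure_inter_preimage_eq_mul (B n) (Set.Ioi y) (hBm n) measurableSet_Ioi
    have h2 : Y n ⁻¹' Set.Ioi y = {ω | Y n ω > y} := rfl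
    have h3 : μ {ω | Y n ω > y} = μ {ω | Y 0 ω > y} := by
      have hid : IdentDistrib (Y n) (Y 0) μ μ := (hident n).comp measurable_snd
      have := hid.measure_mem_eq (measurableSet_Ioi (a := y))
      simpa [Set.preimage, Set.mem_Ioi] using this
    rw [hApre n]
    calc μ (T n ⁻¹' B n ∩ {ω | Y n ω > y}) = μ (T n ⁻¹' B n) * μ (Y n ⁻¹' Set.Ioi y) := by
          rw [← h1]; rfl
      _ = μ (T n ⁻¹' B n) * μ {ω | Y 0 ω > y} := by rw [h2, h3]
  -- disjointness and union
  have hdisj : Pairwise (Function.onFun Disjoint A) := by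
    intro m n hmn
    wlog h : m < n generalizing m n
    · exact (this hmn.symm (by omega)).symm
    refine Set.disjoint_left.2 fun ω hm hn => ?_
    exact hn.2 m h hm.1
  have hUnion : (⋃ n, A n) = {ω | ∃ n, S n ω > x - y} := by
    ext ω
    simp only [Set.mem_iUnion, Set.mem_setOf_eq, hA]
    constructor
    · rintro ⟨n, h, _⟩; exact ⟨n, h⟩
    · rintro ⟨n, h⟩
      have hex : ∃ n, S n ω > x - y := ⟨n, h⟩
      exact ⟨Nat.find hex, Nat.find_spec hex, fun m hm => Nat.find_min hex hm⟩
  -- subset into the target event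
  have hsub : (⋃ n, A n ∩ {ω | Y n ω > y}) ⊆
      {ω | ∃ n, (∑ i ∈ Finset.range n, X i ω) + Y n ω > x} := by
    rintro ω hω
    simp only [Set.mem_iUnion] at hω
    obtain ⟨n, hA', hY'⟩ := hω
    exact ⟨n, by have := hA'.1; simp only [hS] at this; linarith [Set.mem_setOf_eq ▸ hY']⟩
  -- put everything together
  calc μ {ω | ∃ n, (∑ i ∈ Finset.range n, X i ω) + Y n ω > x}
      ≥ μ (⋃ n, A n ∩ {ω | Y n ω > y}) := measure_mono hsub
    _ = ∑' n, μ (A n ∩ {ω | Y n ω > y}) := by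
        refine measure_iUnion ?_ fun n => (hAm n).inter (measurableSet_lt measurable_const (hY n))
        intro m n hmn
        exact ((hdisj hmn).mono (Set.inter_subset_left) (Set.inter_subset_left))
    _ = ∑' n, μ (A n) * μ {ω | Y 0 ω > y} := by simp_rw [hprod]
    _ = μ {ω | Y 0 ω > y} * ∑' n, μ (A n) := by rw [ENNReal.tsum_mul_right, mul_comm]
    _ = μ {ω | Y 0 ω > y} * μ (⋃ n, A n) := by rw [measure_iUnion hdisj hAm]
    _ = μ {ω | Y 0 ω > y} * μ {ω | ∃ n, (∑ i ∈ Finset.range n, X i ω) > x - y} := by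
        rw [hUnion]
end

section
/- Let {(X_k, Y_k) : k ≥ 1} be i.i.d. ℝ²-valued random vectors. Put S₀ = 0, S_n = X₁ + ⋯ + X_n, ξ = sup_{n≥0} S_n and ζ = sup_{n≥0} (S_n + Y_{n+1}). Then there exists a constant c ∈ (1, ∞), not depending on Φ, such that for every nondecreasing differentiable function Φ : [0, ∞) → [0, ∞), E Φ(ξ) ≤ Φ(0) + c · E Φ(c + ζ⁺), where ζ⁺ = max(ζ, 0). -/
open MeasureTheory ProbabilityTheory Filter Finset Real

/-- Core stopping-time / independence step: with `p = μ{-a ≤ Y 0}`,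
`p · μ{∃ k ≤ N, S_k ≥ s} ≤ μ{∃ k ≤ N, S_k + Y_k ≥ s - a}`. -/
lemma sup_random_walk_key {Ω : Type*} [MeasurableSpace Ω] (μ : Measure Ω)
    [IsProbabilityMeasure μ] (X Y : ℕ → Ω → ℝ)
    (hX : ∀ n, Measurable (X n)) (hY : ∀ n, Measurable (Y n))
    (hindep : iIndepFun (fun n ω => (X n ω, Y n ω)) μ)
    (hident : ∀ n, IdentDistrib (fun ω => (X n ω, Y n ω)) (fun ω => (X 0 ω, Y 0 ω)) μ μ)
    (a s : ℝ) (N : ℕ) :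
    μ {ω | -a ≤ Y 0 ω} * μ {ω | ∃ k ≤ N, s ≤ ∑ i ∈ Finset.range k, X i ω}
      ≤ μ {ω | ∃ k ≤ N, s - a ≤ (∑ i ∈ Finset.range k, X i ω) + Y k ω} := by
  classical
  set S : ℕ → Ω → ℝ := fun k ω => ∑ i ∈ Finset.range k, X i ω with hSdef
  have hSmeas : ∀ k, Measurable (S k) := fun k => Finset.measurable_sum _ fun i _ => hX i
  set E : ℕ → Set Ω := fun k => {ω | s ≤ S k ω ∧ ∀ j < k, S j ω < s} with hEdef
  have hEmeas : ∀ k, MeasurableSet (E k) := by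
    intro k
    have : E k = {ω | s ≤ S k ω} ∩ ⋂ j, ⋂ _ : j < k, {ω | S j ω < s} := by
      ext ω; simp [hEdef, Set.mem_iInter]
    rw [this]
    exact (measurableSet_le measurable_const (hSmeas k)).inter
      (MeasurableSet.iInter fun j => MeasurableSet.iInter fun _ =>
        measurableSet_lt (hSmeas j) measurable_const)
  have hUnion : {ω | ∃ k ≤ N, s ≤ S k ω} = ⋃ k ∈ Finset.range (N + 1), E k := by
    ext ω
    simp only [Set.mem_setOf_eq, Set.mem_iUnion, Finset.mem_range, hEdef]
    constructor
    · rintro ⟨k, hk, hks⟩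
      have hex : ∃ m, s ≤ S m ω := ⟨k, hks⟩
      have hle : Nat.find hex ≤ k := Nat.find_min' hex hks
      exact ⟨Nat.find hex, by omega, Nat.find_spec hex,
        fun j hj => lt_of_not_ge (Nat.find_min hex hj)⟩
    · rintro ⟨k, hk, hks, -⟩; exact ⟨k, by omega, hks⟩
  have hdisj : (↑(Finset.range (N + 1)) : Set ℕ).PairwiseDisjoint E := by
    intro k _ l _ hkl
    refine Set.disjoint_left.mpr fun ω hk hl => ?_
    rcases lt_or_gt_of_ne hkl with h | h
    · exact absurd hk.1 (not_le.mpr (hl.2 k h))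
    · exact absurd hl.1 (not_le.mpr (hk.2 l h))
  have hpair : ∀ i, Measurable fun ω => (X i ω, Y i ω) := fun i => (hX i).prodMk (hY i)
  have hidY : ∀ k, μ {ω | -a ≤ Y k ω} = μ {ω | -a ≤ Y 0 ω} := by
    intro k
    have h2 : IdentDistrib (Y k) (Y 0) μ μ := (hident k).comp measurable_snd
    have := h2.measure_mem_eq (measurableSet_Ici (a := -a))
    simpa [Set.preimage, Set.mem_Ici] using this
  have hindepk : ∀ k, μ (E k ∩ {ω | -a ≤ Y k ω}) = μ (E k) * μ {ω | -a ≤ Y k ω} := by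
    intro k
    have hdisjST : Disjoint (Finset.range k) ({k} : Finset ℕ) := by
      simp [Finset.disjoint_singleton_right]
    have hIF := hindep.indepFun_finset (Finset.range k) {k} hdisjST hpair
    set T : ℕ → (↥(Finset.range k) → ℝ × ℝ) → ℝ :=
      fun j v => ∑ i ∈ Finset.range j,
        (if h : i ∈ Finset.range k then (v ⟨i, h⟩).1 else 0) with hTdef
    have hTmeas : ∀ j, Measurable (T j) := by
      intro j
      apply Finset.measurable_sum
      intro i _
      by_cases h : i ∈ Finset.range k
      · simp only [dif_pos h]; exact (measurable_pi_apply _).fst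
      · simp only [dif_neg h]; exact measurable_const
    have hTF : ∀ j ≤ k, ∀ ω, T j (fun i : ↥(Finset.range k) => (X i ω, Y i ω)) = S j ω := by
      intro j hj ω
      apply Finset.sum_congr rfl
      intro i hi
      have h : i ∈ Finset.range k := Finset.mem_range.mpr
        (lt_of_lt_of_le (Finset.mem_range.mp hi) hj)
      rw [dif_pos h]
    set A : Set (↥(Finset.range k) → ℝ × ℝ) :=
      {v | s ≤ T k v ∧ ∀ j < k, T j v < s} with hAdef
    have hAmeas : MeasurableSet A := by
      have : A = {v | s ≤ T k v} ∩ ⋂ j, ⋂ _ : j < k, {v | T j v < s} := by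
        ext v; simp [hAdef, Set.mem_iInter]
      rw [this]
      exact (measurableSet_le measurable_const (hTmeas k)).inter
        (MeasurableSet.iInter fun j => MeasurableSet.iInter fun _ =>
          measurableSet_lt (hTmeas j) measurable_const)
    set B : Set (↥({k} : Finset ℕ) → ℝ × ℝ) :=
      {v | -a ≤ (v ⟨k, Finset.mem_singleton_self k⟩).2} with hBdef
    have hBmeas : MeasurableSet B :=
      measurableSet_le measurable_const ((measurable_pi_apply _).snd)
    have hkey := hIF.measure_inter_preimage_eq_mul A B hAmeas hBmeas
    have hFA : (fun ω (i : ↥(Finset.range k)) => (X (i : ℕ) ω, Y (i : ℕ) ω)) ⁻¹' A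
        = E k := by
      ext ω
      simp only [Set.mem_preimage, hAdef, Set.mem_setOf_eq, hEdef]
      constructor
      · rintro ⟨h1, h2⟩
        exact ⟨by rwa [hTF k le_rfl ω] at h1,
          fun j hj => by rw [← hTF j hj.le ω]; exact h2 j hj⟩
      · rintro ⟨h1, h2⟩
        exact ⟨by rwa [hTF k le_rfl ω], fun j hj => by rw [hTF j hj.le ω]; exact h2 j hj⟩
    have hGB : (fun ω (i : ↥({k} : Finset ℕ)) => (X (i : ℕ) ω, Y (i : ℕ) ω)) ⁻¹' B
        = {ω | -a ≤ Y k ω} := rfl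
    rw [hFA, hGB] at hkey
    exact hkey
  calc μ {ω | -a ≤ Y 0 ω} * μ {ω | ∃ k ≤ N, s ≤ S k ω}
      = μ {ω | -a ≤ Y 0 ω} * ∑ k ∈ Finset.range (N + 1), μ (E k) := by
        rw [hUnion, measure_biUnion_finset hdisj fun k _ => hEmeas k]
    _ = ∑ k ∈ Finset.range (N + 1), μ (E k ∩ {ω | -a ≤ Y k ω}) := by
        rw [Finset.mul_sum]
        refine Finset.sum_congr rfl fun k _ => ?_
        rw [hindepk k, hidY k, mul_comm]
    _ = μ (⋃ k ∈ Finset.range (N + 1), (E k ∩ {ω | -a ≤ Y k ω})) := by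
        rw [measure_biUnion_finset (hdisj.mono fun k => Set.inter_subset_left)
          fun k _ => (hEmeas k).inter (measurableSet_le measurable_const (hY k))]
    _ ≤ μ {ω | ∃ k ≤ N, s - a ≤ S k ω + Y k ω} := by
        apply measure_mono
        rintro ω hω
        simp only [Set.mem_iUnion, Finset.mem_range] at hω
        obtain ⟨k, hk, ⟨hks, -⟩, hY⟩ := hω
        exact ⟨k, by omega, by simp only [Set.mem_setOf_eq] at hY ⊢; linarith⟩

/-- **Moment inequality.** Let `(X_k, Y_k)` be i.i.d., `S_0 = 0`, `S_n = X_1 + ⋯ + X_n`,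
`ξ = sup_{n≥0} S_n` (note `ξ ≥ 0`) and `ζ = sup_{n≥0} (S_n + Y_{n+1})`. Then there is a
constant `c ∈ (1, ∞)`, not depending on `Φ`, such that for every nondecreasing
differentiable `Φ : [0,∞) → [0,∞)`: `E Φ(ξ) ≤ Φ(0) + c · E Φ(c + ζ⁺)`.
(Here `Φ(ξ) = sup_n Φ(S_n ∨ 0)` and `Φ(c + ζ⁺) = sup_n Φ(c + ((S_n + Y_{n+1}) ∨ 0))`,
using monotonicity and continuity of `Φ`; expectations are lower integrals in `ℝ≥0∞`.) -/
theorem sup_random_walk_moment_inequality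
    {Ω : Type*} [MeasurableSpace Ω] (μ : Measure Ω) [IsProbabilityMeasure μ]
    (X Y : ℕ → Ω → ℝ)
    (hX : ∀ n, Measurable (X n)) (hY : ∀ n, Measurable (Y n))
    (hindep : iIndepFun (fun n ω => (X n ω, Y n ω)) μ)
    (hident : ∀ n, IdentDistrib (fun ω => (X n ω, Y n ω)) (fun ω => (X 0 ω, Y 0 ω)) μ μ) :
    ∃ c : ℝ, 1 < c ∧
      ∀ Φ : ℝ → ℝ, MonotoneOn Φ (Set.Ici 0) → (∀ x ∈ Set.Ici (0 : ℝ), 0 ≤ Φ x) →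
        DifferentiableOn ℝ Φ (Set.Ici 0) →
        ∫⁻ ω, ⨆ n, ENNReal.ofReal (Φ (max (∑ i ∈ Finset.range n, X i ω) 0)) ∂μ ≤
          ENNReal.ofReal (Φ 0) + ENNReal.ofReal c *
            ∫⁻ ω, ⨆ n, ENNReal.ofReal
              (Φ (c + max ((∑ i ∈ Finset.range n, X i ω) + Y n ω) 0)) ∂μ := by
  classical
  -- choose `n₀` with `μ {-n₀ ≤ Y 0} ≥ 1/2`
  obtain ⟨n₀, hn₀⟩ : ∃ n : ℕ, (2⁻¹ : ENNReal) ≤ μ {ω | -(n : ℝ) ≤ Y 0 ω} := by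
    have hmono : Monotone fun n : ℕ => {ω | -(n : ℝ) ≤ Y 0 ω} := by
      intro m n hmn ω hω
      simp only [Set.mem_setOf_eq] at hω ⊢
      have : (m : ℝ) ≤ (n : ℝ) := by exact_mod_cast hmn
      linarith
    have hun : ⋃ n : ℕ, {ω | -(n : ℝ) ≤ Y 0 ω} = Set.univ := by
      ext ω
      simp only [Set.mem_iUnion, Set.mem_univ, iff_true, Set.mem_setOf_eq]
      obtain ⟨n, hn⟩ := exists_nat_ge (-(Y 0 ω))
      exact ⟨n, by linarith⟩
    have htend := tendsto_measure_iUnion_atTop (μ := μ) hmono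
    rw [hun, measure_univ] at htend
    have hhalf : (2⁻¹ : ENNReal) < 1 := by norm_num
    exact (htend.eventually (eventually_ge_nhds hhalf)).exists
  set a : ℝ := (n₀ : ℝ) with ha
  set c : ℝ := (n₀ : ℝ) + 2 with hc
  have ha0 : (0 : ℝ) ≤ a := Nat.cast_nonneg n₀
  have hc1 : 1 < c := by rw [hc]; linarith
  have hca : a < c := by rw [hc]; linarith
  refine ⟨c, hc1, ?_⟩
  intro Φ hΦmono hΦpos _
  set Ψ : ℝ → ℝ := fun x => Φ (max x 0) with hΨdef
  have hΨmono : Monotone Ψ := fun x y hxy =>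
    hΦmono (Set.mem_Ici.mpr (le_max_right _ _)) (Set.mem_Ici.mpr (le_max_right _ _)) (max_le_max hxy le_rfl)
  have hΨmeas : Measurable Ψ := hΨmono.measurable
  have hΨnn : ∀ x, 0 ≤ Ψ x := fun x => hΦpos _ (Set.mem_Ici.mpr (le_max_right _ _))
  have hΨ0 : Ψ 0 = Φ 0 := by simp [hΨdef]
  have hΦ0nn : 0 ≤ Φ 0 := hΦpos 0 Set.self_mem_Ici
  -- partial maxima
  have hne : ∀ N : ℕ, (Finset.range (N + 1)).Nonempty :=
    fun N => Finset.nonempty_range_iff.mpr (Nat.succ_ne_zero N)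
  set M : ℕ → Ω → ℝ := fun N ω =>
    (Finset.range (N + 1)).sup' (hne N) fun k => max (∑ i ∈ Finset.range k, X i ω) 0 with hMdef
  set Z : ℕ → Ω → ℝ := fun N ω =>
    (Finset.range (N + 1)).sup' (hne N)
      fun k => max ((∑ i ∈ Finset.range k, X i ω) + Y k ω) 0 with hZdef
  have hMmeas : ∀ N, Measurable (M N) := by
    intro N
    have heq : M N = (Finset.range (N + 1)).sup' (hne N)
        (fun k ω => max (∑ i ∈ Finset.range k, X i ω) 0) := by
      funext ω
      exact (Finset.sup'_apply (hne N)
        (fun k ω => max (∑ i ∈ Finset.range k, X i ω) 0) ω).symm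
    rw [heq]
    exact Finset.measurable_sup' (hne N)
      (fun k _ => (Finset.measurable_sum _ fun i _ => hX i).max measurable_const)
  have hZmeas : ∀ N, Measurable (Z N) := by
    intro N
    have heq : Z N = (Finset.range (N + 1)).sup' (hne N)
        (fun k ω => max ((∑ i ∈ Finset.range k, X i ω) + Y k ω) 0) := by
      funext ω
      exact (Finset.sup'_apply (hne N)
        (fun k ω => max ((∑ i ∈ Finset.range k, X i ω) + Y k ω) 0) ω).symm
    rw [heq]
    exact Finset.measurable_sup' (hne N)
      (fun k _ => ((Finset.measurable_sum _ fun i _ => hX i).add (hY k)).max measurable_const)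
  have hMattain : ∀ N ω, ∃ k ≤ N, M N ω = max (∑ i ∈ Finset.range k, X i ω) 0 := by
    intro N ω
    obtain ⟨k, hk, hkeq⟩ := Finset.exists_mem_eq_sup' (hne N)
      fun k => max (∑ i ∈ Finset.range k, X i ω) 0
    exact ⟨k, by simpa using Nat.lt_succ_iff.mp (Finset.mem_range.mp hk), hkeq⟩
  have hZattain : ∀ N ω, ∃ k ≤ N, Z N ω = max ((∑ i ∈ Finset.range k, X i ω) + Y k ω) 0 := by
    intro N ω
    obtain ⟨k, hk, hkeq⟩ := Finset.exists_mem_eq_sup' (hne N)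
      fun k => max ((∑ i ∈ Finset.range k, X i ω) + Y k ω) 0
    exact ⟨k, Nat.lt_succ_iff.mp (Finset.mem_range.mp hk), hkeq⟩
  have hMbound : ∀ N k, k ≤ N → ∀ ω, max (∑ i ∈ Finset.range k, X i ω) 0 ≤ M N ω :=
    fun N k hk ω => Finset.le_sup' (fun k => max (∑ i ∈ Finset.range k, X i ω) 0)
      (Finset.mem_range.mpr (Nat.lt_succ_iff.mpr hk))
  have hZbound : ∀ N k, k ≤ N → ∀ ω,
      max ((∑ i ∈ Finset.range k, X i ω) + Y k ω) 0 ≤ Z N ω :=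
    fun N k hk ω => Finset.le_sup'
      (fun k => max ((∑ i ∈ Finset.range k, X i ω) + Y k ω) 0)
      (Finset.mem_range.mpr (Nat.lt_succ_iff.mpr hk))
  have hZnn : ∀ N ω, 0 ≤ Z N ω := fun N ω =>
    le_trans (le_max_right _ _) (hZbound N 0 (Nat.zero_le N) ω)
  have hMmono : ∀ ω, Monotone fun N => M N ω := by
    intro ω
    apply monotone_nat_of_le_succ
    intro n
    exact Finset.sup'_mono _ (Finset.range_subset_range.mpr (by omega)) (hne n)
  -- rewrite LHS integrand
  have hLHS : ∀ ω, (⨆ n, ENNReal.ofReal (Φ (max (∑ i ∈ Finset.range n, X i ω) 0)))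
      = ⨆ N, ENNReal.ofReal (Ψ (M N ω)) := by
    intro ω
    apply le_antisymm
    · refine iSup_le fun n => ?_
      refine le_trans ?_ (le_iSup _ n)
      apply ENNReal.ofReal_le_ofReal
      have h1 : Φ (max (∑ i ∈ Finset.range n, X i ω) 0)
          = Ψ (max (∑ i ∈ Finset.range n, X i ω) 0) := by
        simp [hΨdef, max_assoc]
      rw [h1]
      exact hΨmono (hMbound n n le_rfl ω)
    · refine iSup_le fun N => ?_
      obtain ⟨k, hk, hkeq⟩ := hMattain N ω
      refine le_trans ?_ (le_iSup _ k)
      apply ENNReal.ofReal_le_ofReal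
      rw [hkeq]
      simp [hΨdef, max_assoc]
  have hRHS : ∀ N ω, ENNReal.ofReal (Ψ (c + Z N ω)) ≤
      ⨆ n, ENNReal.ofReal (Φ (c + max ((∑ i ∈ Finset.range n, X i ω) + Y n ω) 0)) := by
    intro N ω
    obtain ⟨k, hk, hkeq⟩ := hZattain N ω
    refine le_trans ?_ (le_iSup _ k)
    apply ENNReal.ofReal_le_ofReal
    rw [hkeq]
    have hpos : (0:ℝ) ≤ c + max ((∑ i ∈ Finset.range k, X i ω) + Y k ω) 0 := by
      have := le_max_right ((∑ i ∈ Finset.range k, X i ω) + Y k ω) 0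
      nlinarith [hc1]
    simp [hΨdef, max_eq_left hpos]
  -- the per-N estimate
  have hstep : ∀ N : ℕ, ∫⁻ ω, ENNReal.ofReal (Ψ (M N ω)) ∂μ ≤
      ENNReal.ofReal (Φ 0) + 2 * ∫⁻ ω, ENNReal.ofReal (Ψ (c + Z N ω)) ∂μ := by
    intro N
    have hMNmeas : Measurable fun ω => Ψ (M N ω) := hΨmeas.comp (hMmeas N)
    have hZNmeas : Measurable fun ω => Ψ (c + Z N ω) :=
      hΨmeas.comp (measurable_const.add (hZmeas N))
    -- key distributional inequality for `t > Φ 0`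
    have key_t : ∀ t : ℝ, Φ 0 < t →
        μ {ω | t < Ψ (M N ω)} ≤ 2 * μ {ω | t < Ψ (c + Z N ω)} := by
      intro t ht
      set A : Set ℝ := {x | t < Ψ x} with hAdef
      by_cases hA : A.Nonempty
      · have hbdd : BddBelow A := by
          refine ⟨0, fun x hx => ?_⟩
          by_contra hx0
          push_neg at hx0
          have : Ψ x ≤ Ψ 0 := hΨmono hx0.le
          rw [hΨ0] at this
          exact absurd hx (by simp only [hAdef, Set.mem_setOf_eq]; linarith)
        set sb : ℝ := sInf A with hsb
        have hIoi : ∀ x, sb < x → t < Ψ x := by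
          intro x hx
          obtain ⟨y, hyA, hyx⟩ := exists_lt_of_csInf_lt hA hx
          exact lt_of_lt_of_le hyA (hΨmono hyx.le)
        by_cases hsbpos : 0 < sb
        · -- main case
          have sub1 : {ω | t < Ψ (M N ω)} ⊆
              {ω | ∃ k ≤ N, sb ≤ ∑ i ∈ Finset.range k, X i ω} := by
            intro ω hω
            have hMA : M N ω ∈ A := hω
            have hsbM : sb ≤ M N ω := csInf_le hbdd hMA
            obtain ⟨k, hk, hkeq⟩ := hMattain N ω
            rw [hkeq] at hsbM
            rcases le_max_iff.mp hsbM with h | h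
            · exact ⟨k, hk, h⟩
            · linarith
          have sub2 : {ω | ∃ k ≤ N, sb - a ≤ (∑ i ∈ Finset.range k, X i ω) + Y k ω} ⊆
              {ω | t < Ψ (c + Z N ω)} := by
            rintro ω ⟨k, hk, hks⟩
            have h1 : sb - a ≤ Z N ω :=
              le_trans (le_trans hks (le_max_left _ _)) (hZbound N k hk ω)
            have h2 : 0 ≤ Z N ω := hZnn N ω
            have : sb < c + Z N ω := by
              rcases le_or_gt sb a with h | h
              · linarith
              · linarith
            exact hIoi _ this
          have hkeyA := sup_random_walk_key μ X Y hX hY hindep hident a sb N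
          calc μ {ω | t < Ψ (M N ω)}
              ≤ μ {ω | ∃ k ≤ N, sb ≤ ∑ i ∈ Finset.range k, X i ω} := measure_mono sub1
            _ = 2 * (2⁻¹ * μ {ω | ∃ k ≤ N, sb ≤ ∑ i ∈ Finset.range k, X i ω}) := by
                rw [← mul_assoc, ENNReal.mul_inv_cancel two_ne_zero ENNReal.ofNat_ne_top, one_mul]
            _ ≤ 2 * (μ {ω | -a ≤ Y 0 ω} * μ {ω | ∃ k ≤ N, sb ≤ ∑ i ∈ Finset.range k, X i ω}) := by
                gcongr

            _ ≤ 2 * μ {ω | ∃ k ≤ N, sb - a ≤ (∑ i ∈ Finset.range k, X i ω) + Y k ω} := by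
                gcongr
            _ ≤ 2 * μ {ω | t < Ψ (c + Z N ω)} := by gcongr
        · -- `sb ≤ 0`: the right event is everything
          push_neg at hsbpos
          have hall : {ω | t < Ψ (c + Z N ω)} = Set.univ := by
            ext ω
            simp only [Set.mem_univ, iff_true, Set.mem_setOf_eq]
            apply hIoi
            have := hZnn N ω
            linarith
          calc μ {ω | t < Ψ (M N ω)} ≤ 1 := prob_le_one
            _ ≤ 2 * μ {ω | t < Ψ (c + Z N ω)} := by
                rw [hall, measure_univ, mul_one]
                exact one_le_two
      · -- A empty
        have : {ω | t < Ψ (M N ω)} = ∅ := by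
          ext ω
          simp only [Set.mem_empty_iff_false, iff_false, Set.mem_setOf_eq]
          intro h
          exact hA ⟨M N ω, h⟩
        rw [this, measure_empty]
        exact zero_le
    -- layer cake
    have hlc1 : ∫⁻ ω, ENNReal.ofReal (Ψ (M N ω)) ∂μ
        = ∫⁻ t in Set.Ioi 0, μ {ω | t < Ψ (M N ω)} := by
      exact lintegral_eq_lintegral_meas_lt μ (ae_of_all _ fun ω => hΨnn _) hMNmeas.aemeasurable
    have hlc2 : ∫⁻ ω, ENNReal.ofReal (Ψ (c + Z N ω)) ∂μ
        = ∫⁻ t in Set.Ioi 0, μ {ω | t < Ψ (c + Z N ω)} := by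
      exact lintegral_eq_lintegral_meas_lt μ (ae_of_all _ fun ω => hΨnn _) hZNmeas.aemeasurable
    have hanti : Antitone fun t : ℝ => μ {ω | t < Ψ (c + Z N ω)} := by
      intro t₁ t₂ h
      apply measure_mono
      intro ω hω
      simp only [Set.mem_setOf_eq] at hω ⊢
      linarith
    have hsplit : Set.Ioc (0:ℝ) (Φ 0) ∪ Set.Ioi (Φ 0) = Set.Ioi (0:ℝ) :=
      Set.Ioc_union_Ioi_eq_Ioi hΦ0nn
    calc ∫⁻ ω, ENNReal.ofReal (Ψ (M N ω)) ∂μ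
        = ∫⁻ t in Set.Ioi 0, μ {ω | t < Ψ (M N ω)} := hlc1
      _ = ∫⁻ t in Set.Ioc (0:ℝ) (Φ 0) ∪ Set.Ioi (Φ 0), μ {ω | t < Ψ (M N ω)} := by
          rw [hsplit]
      _ = (∫⁻ t in Set.Ioc (0:ℝ) (Φ 0), μ {ω | t < Ψ (M N ω)})
          + ∫⁻ t in Set.Ioi (Φ 0), μ {ω | t < Ψ (M N ω)} :=
          lintegral_union measurableSet_Ioi (Set.Ioc_disjoint_Ioi le_rfl)
      _ ≤ ENNReal.ofReal (Φ 0) + 2 * ∫⁻ ω, ENNReal.ofReal (Ψ (c + Z N ω)) ∂μ := by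
          gcongr
          · calc ∫⁻ t in Set.Ioc (0:ℝ) (Φ 0), μ {ω | t < Ψ (M N ω)}
                ≤ ∫⁻ _ in Set.Ioc (0:ℝ) (Φ 0), 1 :=
                  setLIntegral_mono measurable_const fun t _ => prob_le_one
              _ = ENNReal.ofReal (Φ 0) := by
                  rw [setLIntegral_one, Real.volume_Ioc, sub_zero]
          · calc ∫⁻ t in Set.Ioi (Φ 0), μ {ω | t < Ψ (M N ω)}
                ≤ ∫⁻ t in Set.Ioi (Φ 0), 2 * μ {ω | t < Ψ (c + Z N ω)} :=
                  setLIntegral_mono (hanti.measurable.const_mul 2) fun t ht => key_t t ht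
              _ ≤ ∫⁻ t in Set.Ioi 0, 2 * μ {ω | t < Ψ (c + Z N ω)} :=
                  lintegral_mono_set (Set.Ioi_subset_Ioi hΦ0nn)
              _ = 2 * ∫⁻ t in Set.Ioi 0, μ {ω | t < Ψ (c + Z N ω)} :=
                  lintegral_const_mul 2 hanti.measurable -- wrong: measurability in t of integrand
              _ = 2 * ∫⁻ ω, ENNReal.ofReal (Ψ (c + Z N ω)) ∂μ := by rw [← hlc2]
  -- assemble
  have h2c : (2 : ENNReal) ≤ ENNReal.ofReal c := by
    rw [show (2 : ENNReal) = ENNReal.ofReal 2 by norm_num]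
    apply ENNReal.ofReal_le_ofReal
    rw [hc]; linarith [Nat.cast_nonneg (α := ℝ) n₀]
  calc ∫⁻ ω, ⨆ n, ENNReal.ofReal (Φ (max (∑ i ∈ Finset.range n, X i ω) 0)) ∂μ
      = ∫⁻ ω, ⨆ N, ENNReal.ofReal (Ψ (M N ω)) ∂μ := lintegral_congr hLHS
    _ = ⨆ N, ∫⁻ ω, ENNReal.ofReal (Ψ (M N ω)) ∂μ := by
        apply lintegral_iSup
        · exact fun N => ENNReal.measurable_ofReal.comp (hΨmeas.comp (hMmeas N))
        · intro i j hij ω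
          exact ENNReal.ofReal_le_ofReal (hΨmono (hMmono ω hij))
    _ ≤ ENNReal.ofReal (Φ 0) + ENNReal.ofReal c *
          ∫⁻ ω, ⨆ n, ENNReal.ofReal
            (Φ (c + max ((∑ i ∈ Finset.range n, X i ω) + Y n ω) 0)) ∂μ := by
        refine iSup_le fun N => ?_
        refine le_trans (hstep N) ?_
        exact add_le_add le_rfl (mul_le_mul' h2c (lintegral_mono fun ω => hRHS N ω))
end

section
/- Suppose there exists β ∈ (0, 1) with P{|M| ≤ β} = 1, and let s > 0 satisfy E e^{s|Q|} < ∞. Then E exp( s · Σ_{k≥1} |Π_{k−1} Q_k| ) < ∞; in particular the perpetuity series converges almost surely and E e^{s|Z∞|} < ∞. -/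
open MeasureTheory ProbabilityTheory Filter Finset Real
open scoped ENNReal NNReal

/-- If `|M| ≤ β < 1` a.s. for some `β ∈ (0,1)` and `E e^{s|Q|} < ∞` for some `s > 0`,
then `E exp(s Σ_{k≥1} |Π_{k-1} Q_k|) < ∞`; in particular the perpetuity series
converges almost surely and `E e^{s|Z∞|} < ∞`. -/
theorem perpetuity_exponential_moment_contractive
    {Ω : Type*} [MeasurableSpace Ω] (μ : Measure Ω) [IsProbabilityMeasure μ]
    (M Q : ℕ → Ω → ℝ)
    (hM : ∀ n, Measurable (M n)) (hQ : ∀ n, Measurable (Q n))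
    (hindep : iIndepFun (fun n ω => (M n ω, Q n ω)) μ)
    (hident : ∀ n, IdentDistrib (fun ω => (M n ω, Q n ω)) (fun ω => (M 0 ω, Q 0 ω)) μ μ)
    (hβ : ∃ β : ℝ, β ∈ Set.Ioo (0 : ℝ) 1 ∧ μ {ω | |M 0 ω| ≤ β} = 1)
    (s : ℝ) (hs : 0 < s)
    (hQexp : ∫⁻ ω, ENNReal.ofReal (Real.exp (s * |Q 0 ω|)) ∂μ < ⊤) :
    (∫⁻ ω, ⨆ n, ENNReal.ofReal
        (Real.exp (s * ∑ k ∈ Finset.range n,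
          |(∏ i ∈ Finset.range k, M i ω) * Q k ω|)) ∂μ < ⊤) ∧
    ∃ Z : Ω → ℝ,
      (∀ᵐ ω ∂μ, Tendsto
        (fun n => ∑ k ∈ Finset.range n, (∏ i ∈ Finset.range k, M i ω) * Q k ω)
        atTop (nhds (Z ω))) ∧
      ∫⁻ ω, ENNReal.ofReal (Real.exp (s * |Z ω|)) ∂μ < ⊤ := by
  classical
  obtain ⟨b, ⟨hb0, hb1⟩, hbM⟩ := hβ
  -- a.s. all |M n| ≤ b
  have hMb : ∀ᵐ ω ∂μ, ∀ n, |M n ω| ≤ b := by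
    rw [ae_all_iff]
    intro n
    have hid : IdentDistrib (M n) (M 0) μ μ := (hident n).comp measurable_fst
    have hset : MeasurableSet {x : ℝ | |x| ≤ b} :=
      measurableSet_le (measurable_id.abs) measurable_const
    have h1 : μ {ω | |M n ω| ≤ b} = 1 := by
      have := hid.measure_mem_eq hset
      simpa using this.trans hbM
    have hms : MeasurableSet {ω | |M n ω| ≤ b} :=
      measurableSet_le ((hM n).abs) measurable_const
    rw [ae_iff]
    have : {ω | ¬ |M n ω| ≤ b} = {ω | |M n ω| ≤ b}ᶜ := rfl
    rw [this, measure_compl hms (measure_ne_top μ _), h1, measure_univ]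
    simp
  -- abbreviations
  set F : Ω → ℝ≥0∞ := fun ω => ⨆ n, ENNReal.ofReal
      (Real.exp (s * ∑ k ∈ Finset.range n,
        |(∏ i ∈ Finset.range k, M i ω) * Q k ω|)) with hF
  have hSmeas : ∀ n, Measurable fun ω =>
      ∑ k ∈ Finset.range n, |(∏ i ∈ Finset.range k, M i ω) * Q k ω| := by
    intro n
    apply Finset.measurable_sum
    intro k _
    exact ((Finset.measurable_prod _ fun i _ => hM i).mul (hQ k)).abs
  have hFmeas : Measurable F :=
    Measurable.iSup fun n =>
      ENNReal.measurable_ofReal.comp (Real.measurable_exp.comp ((hSmeas n).const_mul s))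
  set g : ℕ → Ω → ℝ≥0∞ :=
    fun k ω => ENNReal.ofReal (Real.exp (s * (b ^ k * |Q k ω|))) with hg
  have hgmeas : ∀ k, Measurable (g k) := fun k =>
    ENNReal.measurable_ofReal.comp
      (Real.measurable_exp.comp (((hQ k).abs.const_mul (b ^ k)).const_mul s))
  have hgind : iIndepFun g μ := by
    exact hindep.comp
      (fun k (p : ℝ × ℝ) => ENNReal.ofReal (Real.exp (s * (b ^ k * |p.2|))))
      (fun k => ENNReal.measurable_ofReal.comp
        (Real.measurable_exp.comp ((measurable_snd.abs.const_mul (b ^ k)).const_mul s)))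
  -- product of integrals via independence
  have hprod : ∀ n, ∫⁻ ω, ∏ k ∈ Finset.range n, g k ω ∂μ
      = ∏ k ∈ Finset.range n, ∫⁻ ω, g k ω ∂μ := by
    intro n
    induction n with
    | zero => simp
    | succ n ih =>
      calc ∫⁻ ω, ∏ k ∈ Finset.range (n + 1), g k ω ∂μ
          = ∫⁻ ω, (∏ k ∈ Finset.range n, g k ω) * g n ω ∂μ := by
            simp only [Finset.prod_range_succ]
        _ = (∫⁻ ω, ∏ k ∈ Finset.range n, g k ω ∂μ) * ∫⁻ ω, g n ω ∂μ := by
            apply lintegral_mul_eq_lintegral_mul_lintegral_of_indepFun''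
            · exact (Finset.measurable_prod _ fun i _ => hgmeas i).aemeasurable
            · exact (hgmeas n).aemeasurable
            · have h := hgind.indepFun_prod_range_succ hgmeas n
              have he : (∏ j ∈ Finset.range n, g j) = fun ω => ∏ k ∈ Finset.range n, g k ω := by
                funext ω; simp
              rwa [he] at h
        _ = ∏ k ∈ Finset.range (n + 1), ∫⁻ ω, g k ω ∂μ := by
            rw [ih, Finset.prod_range_succ]
  -- identical distribution of each factor
  have hgid : ∀ k, ∫⁻ ω, g k ω ∂μ
      = ∫⁻ ω, ENNReal.ofReal (Real.exp (s * (b ^ k * |Q 0 ω|))) ∂μ := by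
    intro k
    have hφ : Measurable fun p : ℝ × ℝ => ENNReal.ofReal (Real.exp (s * (b ^ k * |p.2|))) :=
      ENNReal.measurable_ofReal.comp
        (Real.measurable_exp.comp ((measurable_snd.abs.const_mul (b ^ k)).const_mul s))
    exact ((hident k).comp hφ).lintegral_eq
  set A := ∫⁻ ω, ENNReal.ofReal (Real.exp (s * |Q 0 ω|)) ∂μ with hAdef
  have hA_ne : A ≠ ⊤ := hQexp.ne
  set a := A.toReal with hadef
  have hA1 : (1 : ℝ≥0∞) ≤ A := by
    rw [hAdef]
    calc (1 : ℝ≥0∞) = ∫⁻ _, 1 ∂μ := by simp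
      _ ≤ _ := by
        apply lintegral_mono
        intro ω
        rw [show (1 : ℝ≥0∞) = ENNReal.ofReal 1 by simp]
        exact ENNReal.ofReal_le_ofReal (Real.one_le_exp (by positivity))
  have ha1 : (1 : ℝ) ≤ a := by
    have := ENNReal.toReal_mono hA_ne hA1
    simpa using this
  -- convexity bound
  have hconv : ∀ t x : ℝ, 0 ≤ t → t ≤ 1 → 0 ≤ x →
      Real.exp (t * x) ≤ (1 - t) + t * Real.exp x := by
    intro t x ht ht1 hx
    have h := convexOn_exp.2 (Set.mem_univ (0 : ℝ)) (Set.mem_univ x)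
      (by linarith : (0:ℝ) ≤ 1 - t) ht (by ring)
    simpa using h
  have hQexpmeas : Measurable fun ω => ENNReal.ofReal (Real.exp (s * |Q 0 ω|)) :=
    ENNReal.measurable_ofReal.comp (Real.measurable_exp.comp ((hQ 0).abs.const_mul s))
  -- bound on each factor
  have hfac : ∀ k, ∫⁻ ω, g k ω ∂μ ≤ ENNReal.ofReal (Real.exp (b ^ k * (a - 1))) := by
    intro k
    have htk0 : (0:ℝ) ≤ b ^ k := pow_nonneg hb0.le k
    have htk1 : b ^ k ≤ 1 := pow_le_one₀ hb0.le hb1.le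
    rw [hgid k]
    calc ∫⁻ ω, ENNReal.ofReal (Real.exp (s * (b ^ k * |Q 0 ω|))) ∂μ
        ≤ ∫⁻ ω, (ENNReal.ofReal (1 - b ^ k)
            + ENNReal.ofReal (b ^ k) * ENNReal.ofReal (Real.exp (s * |Q 0 ω|))) ∂μ := by
          apply lintegral_mono
          intro ω
          have h := hconv (b ^ k) (s * |Q 0 ω|) htk0 htk1 (by positivity)
          dsimp only
          rw [← ENNReal.ofReal_mul htk0,
            ← ENNReal.ofReal_add (by linarith) (by positivity)]
          apply ENNReal.ofReal_le_ofReal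
          calc Real.exp (s * (b ^ k * |Q 0 ω|))
              = Real.exp (b ^ k * (s * |Q 0 ω|)) := by ring_nf
            _ ≤ _ := h
      _ = ENNReal.ofReal (1 - b ^ k) + ENNReal.ofReal (b ^ k) * A := by
          rw [lintegral_add_left measurable_const, lintegral_const,
            lintegral_const_mul _ hQexpmeas]
          simp [hAdef]
      _ ≤ ENNReal.ofReal (Real.exp (b ^ k * (a - 1))) := by
          rw [← ENNReal.ofReal_toReal hA_ne, ← hadef, ← ENNReal.ofReal_mul htk0,
            ← ENNReal.ofReal_add (by linarith) (by positivity)]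
          apply ENNReal.ofReal_le_ofReal
          have h := Real.add_one_le_exp (b ^ k * (a - 1))
          nlinarith
  -- product bound
  have hProdBound : ∀ n, ∏ k ∈ Finset.range n, ∫⁻ ω, g k ω ∂μ
      ≤ ENNReal.ofReal (Real.exp ((a - 1) * (1 - b)⁻¹)) := by
    intro n
    calc ∏ k ∈ Finset.range n, ∫⁻ ω, g k ω ∂μ
        ≤ ∏ k ∈ Finset.range n, ENNReal.ofReal (Real.exp (b ^ k * (a - 1))) :=
          Finset.prod_le_prod' fun k _ => hfac k
      _ = ENNReal.ofReal (Real.exp (∑ k ∈ Finset.range n, b ^ k * (a - 1))) := by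
          rw [Real.exp_sum, ENNReal.ofReal_prod_of_nonneg (fun i _ => (Real.exp_pos _).le)]
      _ ≤ _ := by
          apply ENNReal.ofReal_le_ofReal
          apply Real.exp_le_exp.2
          rw [← Finset.sum_mul]
          have hgs : ∑ k ∈ Finset.range n, b ^ k ≤ (1 - b)⁻¹ := by
            calc ∑ k ∈ Finset.range n, b ^ k ≤ ∑' k, b ^ k :=
                Summable.sum_le_tsum _ (fun i _ => pow_nonneg hb0.le i)
                  (summable_geometric_of_lt_one hb0.le hb1)
              _ = (1 - b)⁻¹ := tsum_geometric_of_lt_one hb0.le hb1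
          calc (∑ k ∈ Finset.range n, b ^ k) * (a - 1)
              ≤ (1 - b)⁻¹ * (a - 1) :=
                mul_le_mul_of_nonneg_right hgs (by linarith)
            _ = (a - 1) * (1 - b)⁻¹ := by ring
  -- rewrite exp(s T_n) as product of g's
  have hTprod : ∀ (n : ℕ) (ω : Ω),
      ENNReal.ofReal (Real.exp (s * ∑ k ∈ Finset.range n, b ^ k * |Q k ω|))
        = ∏ k ∈ Finset.range n, g k ω := by
    intro n ω
    rw [Finset.mul_sum, Real.exp_sum,
      ENNReal.ofReal_prod_of_nonneg (fun i _ => (Real.exp_pos _).le)]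
  -- monotone convergence for the dominating sequence
  have hTmeas : ∀ n, Measurable fun ω =>
      ENNReal.ofReal (Real.exp (s * ∑ k ∈ Finset.range n, b ^ k * |Q k ω|)) := by
    intro n
    apply ENNReal.measurable_ofReal.comp
    apply Real.measurable_exp.comp
    apply Measurable.const_mul
    exact Finset.measurable_sum _ fun k _ => ((hQ k).abs.const_mul (b ^ k))
  have hTmono : Monotone fun n (ω : Ω) =>
      ENNReal.ofReal (Real.exp (s * ∑ k ∈ Finset.range n, b ^ k * |Q k ω|)) := by
    intro n m hnm ω
    apply ENNReal.ofReal_le_ofReal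
    apply Real.exp_le_exp.2
    apply mul_le_mul_of_nonneg_left _ hs.le
    apply Finset.sum_le_sum_of_subset_of_nonneg (Finset.range_subset_range.2 hnm)
    intro i _ _
    positivity
  have hMCT : ∫⁻ ω, ⨆ n, ENNReal.ofReal
        (Real.exp (s * ∑ k ∈ Finset.range n, b ^ k * |Q k ω|)) ∂μ
      = ⨆ n, ∫⁻ ω, ENNReal.ofReal
        (Real.exp (s * ∑ k ∈ Finset.range n, b ^ k * |Q k ω|)) ∂μ :=
    lintegral_iSup hTmeas hTmono
  -- main finiteness bound
  have hmain : ∫⁻ ω, F ω ∂μ ≤ ENNReal.ofReal (Real.exp ((a - 1) * (1 - b)⁻¹)) := by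
    have step1 : ∫⁻ ω, F ω ∂μ ≤ ∫⁻ ω, ⨆ n, ENNReal.ofReal
        (Real.exp (s * ∑ k ∈ Finset.range n, b ^ k * |Q k ω|)) ∂μ := by
      apply lintegral_mono_ae
      filter_upwards [hMb] with ω hω
      rw [hF]
      apply iSup_mono
      intro n
      apply ENNReal.ofReal_le_ofReal
      apply Real.exp_le_exp.2
      apply mul_le_mul_of_nonneg_left _ hs.le
      apply Finset.sum_le_sum
      intro k _
      rw [abs_mul]
      apply mul_le_mul_of_nonneg_right _ (abs_nonneg _)
      calc |∏ i ∈ Finset.range k, M i ω| = ∏ i ∈ Finset.range k, |M i ω| :=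
            Finset.abs_prod _ _
        _ ≤ ∏ i ∈ Finset.range k, b :=
            Finset.prod_le_prod (fun i _ => abs_nonneg _) (fun i _ => hω i)
        _ = b ^ k := by simp
    calc ∫⁻ ω, F ω ∂μ ≤ _ := step1
      _ = ⨆ n, ∫⁻ ω, ENNReal.ofReal
          (Real.exp (s * ∑ k ∈ Finset.range n, b ^ k * |Q k ω|)) ∂μ := hMCT
      _ ≤ ENNReal.ofReal (Real.exp ((a - 1) * (1 - b)⁻¹)) := by
          apply iSup_le
          intro n
          calc ∫⁻ ω, ENNReal.ofReal
                (Real.exp (s * ∑ k ∈ Finset.range n, b ^ k * |Q k ω|)) ∂μ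
              = ∫⁻ ω, ∏ k ∈ Finset.range n, g k ω ∂μ :=
                lintegral_congr fun ω => hTprod n ω
            _ = ∏ k ∈ Finset.range n, ∫⁻ ω, g k ω ∂μ := hprod n
            _ ≤ _ := hProdBound n
  have hfin1 : ∫⁻ ω, F ω ∂μ < ⊤ := lt_of_le_of_lt hmain ENNReal.ofReal_lt_top
  -- a.e. finiteness and convergence
  have hae : ∀ᵐ ω ∂μ, F ω < ⊤ := ae_lt_top hFmeas hfin1.ne
  have hkey : ∀ᵐ ω ∂μ,
      (Tendsto (fun n => ∑ k ∈ Finset.range n, (∏ i ∈ Finset.range k, M i ω) * Q k ω)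
        atTop (nhds (∑' k, (∏ i ∈ Finset.range k, M i ω) * Q k ω))) ∧
      ENNReal.ofReal (Real.exp
          (s * |∑' k, (∏ i ∈ Finset.range k, M i ω) * Q k ω|)) ≤ F ω := by
    filter_upwards [hae] with ω hω
    set f : ℕ → ℝ := fun k => (∏ i ∈ Finset.range k, M i ω) * Q k ω with hf
    have hFne : F ω ≠ ⊤ := hω.ne
    have hle : ∀ n, Real.exp (s * ∑ k ∈ Finset.range n, |f k|) ≤ (F ω).toReal := by
      intro n
      have h1 : ENNReal.ofReal (Real.exp (s * ∑ k ∈ Finset.range n, |f k|)) ≤ F ω := by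
        rw [hF]
        exact le_iSup (fun n => ENNReal.ofReal
          (Real.exp (s * ∑ k ∈ Finset.range n, |f k|))) n
      exact (ENNReal.ofReal_le_iff_le_toReal hFne).1 h1
    have hT0 : (0:ℝ) < (F ω).toReal := by
      have := hle 0
      simp only [Finset.range_zero, Finset.sum_empty, mul_zero, Real.exp_zero] at this
      linarith
    have hSb : ∀ n, ∑ k ∈ Finset.range n, |f k| ≤ Real.log ((F ω).toReal) / s := by
      intro n
      rw [le_div_iff₀ hs]
      have h2 := (Real.le_log_iff_exp_le hT0).2 (hle n)
      linarith
    have hsumabs : Summable fun k => |f k| :=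
      summable_of_sum_range_le (fun k => abs_nonneg _) hSb
    have hsum : Summable f := hsumabs.of_abs
    constructor
    · exact hsum.hasSum.tendsto_sum_nat
    · have hZle : |∑' k, f k| ≤ ∑' k, |f k| := by
        have := norm_tsum_le_tsum_norm (f := f) (by simpa [Real.norm_eq_abs] using hsumabs)
        simpa [Real.norm_eq_abs] using this
      have htend : Tendsto
          (fun n => ENNReal.ofReal (Real.exp (s * ∑ k ∈ Finset.range n, |f k|)))
          atTop (nhds (ENNReal.ofReal (Real.exp (s * ∑' k, |f k|)))) := by
        apply ENNReal.tendsto_ofReal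
        exact (Real.continuous_exp.tendsto _).comp
          ((hsumabs.hasSum.tendsto_sum_nat).const_mul s)
      have hbound : ENNReal.ofReal (Real.exp (s * ∑' k, |f k|)) ≤ F ω := by
        apply le_of_tendsto htend
        apply Filter.Eventually.of_forall
        intro n
        rw [hF]
        exact le_iSup (fun n => ENNReal.ofReal
          (Real.exp (s * ∑ k ∈ Finset.range n, |f k|))) n
      refine le_trans ?_ hbound
      exact ENNReal.ofReal_le_ofReal
        (Real.exp_le_exp.2 (mul_le_mul_of_nonneg_left hZle hs.le))
  refine ⟨hfin1, ⟨fun ω => ∑' k, (∏ i ∈ Finset.range k, M i ω) * Q k ω, ?_, ?_⟩⟩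
  · filter_upwards [hkey] with ω h using h.1
  · calc ∫⁻ ω, ENNReal.ofReal
          (Real.exp (s * |∑' k, (∏ i ∈ Finset.range k, M i ω) * Q k ω|)) ∂μ
        ≤ ∫⁻ ω, F ω ∂μ := by
          apply lintegral_mono_ae
          filter_upwards [hkey] with ω h using h.2
      _ < ⊤ := hfin1
end
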